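/- arXiv:1505.07344 — 9 statements merged into one kernel-verified Lean document; each statement's English description precedes it below -/
import Mathlib

section
/- Let H, K be complex Hilbert spaces, (X,μ) and (Y,ν) measure spaces, ρ: Y → X a measurable bijection with ν∘ρ⁻¹ = μ, T: H → K a bounded linear bijection with bounded inverse, and τ: Y → ℂ measurable with |τ(y)| = 1 for all y. Given weakly measurable, essentially norm-bounded Ψ, Φ: X → H, define Ψ̃(y) := τ(y)·T(Ψ(ρ(y))) and Φ̃(y) := τ(y)·T(Φ(ρ(y))). Then (Ψ,Φ) is a reproducing pair for H with respect to (X,μ) if and only if (Ψ̃,Φ̃) is a reproducing pair for K with respect to (Y,ν). -/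
open MeasureTheory
open scoped ComplexConjugate

noncomputable section

/-- `Ψ : X → H` is weakly measurable: `x ↦ ⟨f, Ψ x⟩` is a measurable function for
every `f ∈ H`.  Here `⟨·,·⟩` denotes the inner product in the paper's convention
(linear in the first argument), i.e. `⟨f, Ψ x⟩ = inner ℂ (Ψ x) f` in Mathlib's
convention. -/
def WeaklyMeasurable {X : Type*} [MeasurableSpace X] {H : Type*} [NormedAddCommGroup H]
    [InnerProductSpace ℂ H] (Ψ : X → H) : Prop :=
  ∀ f : H, Measurable fun x => (inner ℂ (Ψ x) f : ℂ)

/-- `Ψ : X → H` is essentially norm-bounded with respect to `μ`. -/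
def EssNormBounded {X : Type*} [MeasurableSpace X] (μ : Measure X) {H : Type*}
    [NormedAddCommGroup H] (Ψ : X → H) : Prop :=
  ∃ C : ℝ, ∀ᵐ x ∂μ, ‖Ψ x‖ ≤ C

/-- `S` is a resolution operator for the pair `(Ψ, Φ)`:
`⟨S f, g⟩ = ∫_X ⟨f, Ψ x⟩ · ⟨Φ x, g⟩ dμ(x)` for all `f, g ∈ H`, where `⟨·,·⟩` is the
paper's inner product (linear in the first argument), i.e. `⟨u, v⟩ = inner v u` in
Mathlib's convention. -/
def IsResolutionOperator {X : Type*} [MeasurableSpace X] (μ : Measure X) {H : Type*}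
    [NormedAddCommGroup H] [InnerProductSpace ℂ H] (Ψ Φ : X → H) (S : H →L[ℂ] H) : Prop :=
  ∀ f g : H, (inner ℂ g (S f) : ℂ) = ∫ x, (inner ℂ (Ψ x) f : ℂ) * (inner ℂ g (Φ x) : ℂ) ∂μ

/-- `(Ψ, Φ)` is a reproducing pair for `H` with respect to `(X, μ)`:  the resolution
operator is a bounded linear operator on `H` with bounded inverse. -/
def IsReproducingPair {X : Type*} [MeasurableSpace X] (μ : Measure X) {H : Type*}
    [NormedAddCommGroup H] [InnerProductSpace ℂ H] (Ψ Φ : X → H) : Prop :=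
  ∃ S : H ≃L[ℂ] H, IsResolutionOperator μ Ψ Φ (S : H →L[ℂ] H)

/-- (Lemma: equivalence of reproducing pairs under a measure-space
isomorphism, a bounded invertible operator and a unimodular weight.) -/
theorem reproducingPair_equiv
    {H K : Type*} [NormedAddCommGroup H] [InnerProductSpace ℂ H] [CompleteSpace H]
    [NormedAddCommGroup K] [InnerProductSpace ℂ K] [CompleteSpace K]
    {X Y : Type*} [MeasurableSpace X] [MeasurableSpace Y]
    (μ : Measure X) (ν : Measure Y)
    (ρ : Y → X) (hρmeas : Measurable ρ) (hρbij : Function.Bijective ρ)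
    (hρμ : ν.map ρ = μ)
    (T : H ≃L[ℂ] K)
    (τ : Y → ℂ) (hτmeas : Measurable τ) (hτ : ∀ y, ‖τ y‖ = 1)
    (Ψ Φ : X → H)
    (hΨw : WeaklyMeasurable Ψ) (hΦw : WeaklyMeasurable Φ)
    (hΨb : EssNormBounded μ Ψ) (hΦb : EssNormBounded μ Φ) :
    IsReproducingPair μ Ψ Φ ↔
      IsReproducingPair ν (fun y => τ y • T (Ψ (ρ y))) (fun y => τ y • T (Φ (ρ y))) := by
  classical
  set Ta : K →L[ℂ] H := ContinuousLinearMap.adjoint (T : H →L[ℂ] K) with hTa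
  set Tb : H →L[ℂ] K := ContinuousLinearMap.adjoint (T.symm : K →L[ℂ] H) with hTb
  have hab : ∀ f : H, Ta (Tb f) = f := by
    intro f
    rw [hTa, hTb, ← ContinuousLinearMap.comp_apply, ← ContinuousLinearMap.adjoint_comp]
    have h : (T.symm : K →L[ℂ] H).comp (T : H →L[ℂ] K) = ContinuousLinearMap.id ℂ H := by
      ext x; simp
    rw [h]; simp [ContinuousLinearMap.adjoint_id]
  have hba : ∀ f : K, Tb (Ta f) = f := by
    intro f
    rw [hTa, hTb, ← ContinuousLinearMap.comp_apply, ← ContinuousLinearMap.adjoint_comp]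
    have h : (T : H →L[ℂ] K).comp (T.symm : K →L[ℂ] H) = ContinuousLinearMap.id ℂ K := by
      ext x; simp
    rw [h]; simp [ContinuousLinearMap.adjoint_id]
  have key : ∀ f g : K,
      (∫ y, (inner ℂ (τ y • T (Ψ (ρ y))) f : ℂ) * (inner ℂ g (τ y • T (Φ (ρ y))) : ℂ) ∂ν)
        = ∫ x, (inner ℂ (Ψ x) (Ta f) : ℂ) * (inner ℂ (Ta g) (Φ x) : ℂ) ∂μ := by
    intro f g
    have hpt : (fun y => (inner ℂ (τ y • T (Ψ (ρ y))) f : ℂ) * (inner ℂ g (τ y • T (Φ (ρ y))) : ℂ))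
        = fun y => (fun x => (inner ℂ (Ψ x) (Ta f) : ℂ) * (inner ℂ (Ta g) (Φ x) : ℂ)) (ρ y) := by
      funext y
      have h1 : (inner ℂ (τ y • T (Ψ (ρ y))) f : ℂ)
          = conj (τ y) * inner ℂ (Ψ (ρ y)) (Ta f) := by
        rw [inner_smul_left, hTa, ContinuousLinearMap.adjoint_inner_right]; rfl
      have h2 : (inner ℂ g (τ y • T (Φ (ρ y))) : ℂ)
          = τ y * inner ℂ (Ta g) (Φ (ρ y)) := by
        rw [inner_smul_right, hTa, ContinuousLinearMap.adjoint_inner_left]; rfl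
      have hu : conj (τ y) * τ y = 1 := by
        rw [Complex.conj_mul', hτ y]; norm_num
      rw [h1, h2]
      calc conj (τ y) * (inner ℂ (Ψ (ρ y)) (Ta f) : ℂ) * (τ y * inner ℂ (Ta g) (Φ (ρ y)))
          = (conj (τ y) * τ y) *
            ((inner ℂ (Ψ (ρ y)) (Ta f) : ℂ) * inner ℂ (Ta g) (Φ (ρ y))) := by ring
        _ = _ := by rw [hu, one_mul]
    have hmeas2 : Measurable (fun x => (inner ℂ (Ta g) (Φ x) : ℂ)) := by
      have : (fun x => (inner ℂ (Ta g) (Φ x) : ℂ))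
          = fun x => conj ((inner ℂ (Φ x) (Ta g) : ℂ)) := by
        funext x; rw [inner_conj_symm]
      rw [this]
      exact Complex.continuous_conj.measurable.comp (hΦw (Ta g))
    have hFmeas : Measurable (fun x => (inner ℂ (Ψ x) (Ta f) : ℂ) * (inner ℂ (Ta g) (Φ x) : ℂ)) :=
      (hΨw (Ta f)).mul hmeas2
    rw [hpt, ← hρμ, integral_map hρmeas.aemeasurable hFmeas.aestronglyMeasurable]
  constructor
  · rintro ⟨S, hS⟩
    refine ⟨ContinuousLinearEquiv.equivOfInverse
        ((T : H →L[ℂ] K).comp ((S : H →L[ℂ] H).comp Ta))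
        (Tb.comp ((S.symm : H →L[ℂ] H).comp (T.symm : K →L[ℂ] H))) ?_ ?_, ?_⟩
    · intro x; simp [hab, hba]
    · intro x; simp [hab, hba]
    · intro f g
      have hL : (inner ℂ g (T (S (Ta f))) : ℂ) = inner ℂ (Ta g) (S (Ta f)) := by
        rw [hTa, ContinuousLinearMap.adjoint_inner_left]; rfl
      show (inner ℂ g (T (S (Ta f))) : ℂ) = _
      rw [hL]
      exact (hS (Ta f) (Ta g)).trans (key f g).symm
  · rintro ⟨S, hS⟩
    refine ⟨ContinuousLinearEquiv.equivOfInverse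
        ((T.symm : K →L[ℂ] H).comp ((S : K →L[ℂ] K).comp Tb))
        (Ta.comp ((S.symm : K →L[ℂ] K).comp (T : H →L[ℂ] K))) ?_ ?_, ?_⟩
    · intro x; simp [hab, hba]
    · intro x; simp [hab, hba]
    · intro f g
      have hL : (inner ℂ g (T.symm (S (Tb f))) : ℂ) = inner ℂ (Tb g) (S (Tb f)) := by
        rw [hTb, ContinuousLinearMap.adjoint_inner_left]; rfl
      have := key (Tb f) (Tb g)
      rw [hab, hab] at this
      show (inner ℂ g (T.symm (S (Tb f))) : ℂ) = _
      rw [hL]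
      exact (hS (Tb f) (Tb g)).trans this
end
end

section
/- Let H, K be complex Hilbert spaces, (X,μ) and (Y,ν) measure spaces, ρ: Y → X a measurable bijection with ν∘ρ⁻¹ = μ, T: H → K a bounded linear bijection with bounded inverse, and τ: Y → ℂ measurable with |τ(y)| = 1 for all y. Given weakly measurable, essentially norm-bounded Ψ, Φ: X → H, define Ψ̃(y) := τ(y)·T(Ψ(ρ(y))) and Φ̃(y) := τ(y)·T(Φ(ρ(y))). If (Ψ,Φ) is a reproducing pair with resolution operator S_{Ψ,Φ}, then T·S_{Ψ,Φ}·T* is a resolution operator for (Ψ̃,Φ̃), i.e., ⟨T S_{Ψ,Φ} T* f, g⟩_K = ∫_Y ⟨f,Ψ̃(y)⟩·⟨Φ̃(y),g⟩ dν(y) for all f,g ∈ K. -/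
open MeasureTheory
open scoped ComplexConjugate

noncomputable section

/-- If `(Ψ, Φ)` is a reproducing pair with resolution operator `S`,
then `T ∘ S ∘ T*` is a resolution operator for the transformed pair
`Ψ̃ y = τ y • T (Ψ (ρ y))`, `Φ̃ y = τ y • T (Φ (ρ y))`. -/
theorem resolutionOperator_equiv
    {H K : Type*} [NormedAddCommGroup H] [InnerProductSpace ℂ H] [CompleteSpace H]
    [NormedAddCommGroup K] [InnerProductSpace ℂ K] [CompleteSpace K]
    {X Y : Type*} [MeasurableSpace X] [MeasurableSpace Y]
    (μ : Measure X) (ν : Measure Y)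
    (ρ : Y → X) (hρmeas : Measurable ρ) (hρbij : Function.Bijective ρ)
    (hρμ : ν.map ρ = μ)
    (T : H ≃L[ℂ] K)
    (τ : Y → ℂ) (hτmeas : Measurable τ) (hτ : ∀ y, ‖τ y‖ = 1)
    (Ψ Φ : X → H)
    (hΨw : WeaklyMeasurable Ψ) (hΦw : WeaklyMeasurable Φ)
    (hΨb : EssNormBounded μ Ψ) (hΦb : EssNormBounded μ Φ)
    (S : H ≃L[ℂ] H) (hS : IsResolutionOperator μ Ψ Φ (S : H →L[ℂ] H)) :
    IsResolutionOperator ν (fun y => τ y • T (Ψ (ρ y))) (fun y => τ y • T (Φ (ρ y)))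
      ((T : H →L[ℂ] K).comp ((S : H →L[ℂ] H).comp
        (ContinuousLinearMap.adjoint (T : H →L[ℂ] K)))) := by
  intro f g
  set T' := ContinuousLinearMap.adjoint (T : H →L[ℂ] K) with hT'
  set F : X → ℂ := fun x => (inner ℂ (Ψ x) (T' f) : ℂ) * (inner ℂ (T' g) (Φ x) : ℂ) with hF
  have hFmeas : Measurable F := by
    have h1 : Measurable fun x => (inner ℂ (Ψ x) (T' f) : ℂ) := hΨw (T' f)
    have h2 : Measurable fun x => (inner ℂ (T' g) (Φ x) : ℂ) := by
      have := hΦw (T' g)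
      have : Measurable fun x => (starRingEnd ℂ) ((inner ℂ (Φ x) (T' g) : ℂ)) :=
        (Complex.continuous_conj.measurable).comp this
      simpa [inner_conj_symm] using this
    exact h1.mul h2
  have hmap : (∫ y, F (ρ y) ∂ν) = ∫ x, F x ∂μ := by
    rw [← hρμ]
    exact (integral_map hρmeas.aemeasurable
      (hFmeas.aestronglyMeasurable)).symm
  have hpt : ∀ y, (inner ℂ ((fun y => τ y • T (Ψ (ρ y))) y) f : ℂ) *
      (inner ℂ g ((fun y => τ y • T (Φ (ρ y))) y) : ℂ) = F (ρ y) := by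
    intro y
    have hτ1 : τ y * (starRingEnd ℂ) (τ y) = 1 := by
      rw [Complex.mul_conj, Complex.normSq_eq_norm_sq, hτ y]
      norm_num
    have e1 : (inner ℂ (T (Ψ (ρ y))) f : ℂ) = inner ℂ (Ψ (ρ y)) (T' f) := by
      rw [hT', ContinuousLinearMap.adjoint_inner_right]
      simp
    have e2 : (inner ℂ g (T (Φ (ρ y))) : ℂ) = inner ℂ (T' g) (Φ (ρ y)) := by
      rw [hT', ContinuousLinearMap.adjoint_inner_left]
      simp
    simp only [inner_smul_left, inner_smul_right, hF]
    rw [e1, e2]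
    have key : (starRingEnd ℂ) (τ y) * (inner ℂ (Ψ (ρ y)) (T' f) : ℂ) *
        (τ y * (inner ℂ (T' g) (Φ (ρ y)) : ℂ)) =
        (τ y * (starRingEnd ℂ) (τ y)) *
          ((inner ℂ (Ψ (ρ y)) (T' f) : ℂ) * (inner ℂ (T' g) (Φ (ρ y)) : ℂ)) := by ring
    rw [key, hτ1, one_mul]
  calc (inner ℂ g (((T : H →L[ℂ] K).comp ((S : H →L[ℂ] H).comp T')) f) : ℂ)
      = inner ℂ (T' g) ((S : H →L[ℂ] H) (T' f)) := by
        simp only [ContinuousLinearMap.comp_apply, hT']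
        rw [ContinuousLinearMap.adjoint_inner_left]
    _ = ∫ x, F x ∂μ := hS (T' f) (T' g)
    _ = ∫ y, F (ρ y) ∂ν := hmap.symm
    _ = ∫ y, (inner ℂ ((fun y => τ y • T (Ψ (ρ y))) y) f : ℂ) *
          (inner ℂ g ((fun y => τ y • T (Φ (ρ y))) y) : ℂ) ∂ν := by
        exact integral_congr_ae (Filter.Eventually.of_forall fun y => (hpt y).symm)
end
end

section
/- Let (Ψ,Φ) be a reproducing pair for a complex Hilbert space H over a measure space (X,μ), with resolution operator S := S_{Ψ,Φ}, and let F: X → ℂ lie in dom(D_Φ). Then there exists f ∈ H with F(x) = ⟨f,Ψ(x)⟩ for μ-a.e. x ∈ X if and only if F(x) = ∫_X ⟨S⁻¹Φ(y),Ψ(x)⟩ F(y) dμ(y) for μ-a.e. x ∈ X. -/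
open MeasureTheory
open scoped ComplexConjugate

noncomputable section

/-- (Reproducing kernel characterization of the range of the analysis
map.)  For a reproducing pair `(Ψ, Φ)` with resolution operator `S` and
`F ∈ dom(D_Φ)`: `F = ⟨f, Ψ(·)⟩` a.e. for some `f ∈ H` iff
`F x = ∫ ⟨S⁻¹ Φ y, Ψ x⟩ F y dμ(y)` a.e. -/
theorem mem_range_analysis_iff_reproducingKernel
    {H : Type*} [NormedAddCommGroup H] [InnerProductSpace ℂ H] [CompleteSpace H]
    {X : Type*} [MeasurableSpace X] (μ : Measure X)
    (Ψ Φ : X → H)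
    (hΨw : WeaklyMeasurable Ψ) (hΦw : WeaklyMeasurable Φ)
    (hΨb : EssNormBounded μ Ψ) (hΦb : EssNormBounded μ Φ)
    (S : H ≃L[ℂ] H) (hS : IsResolutionOperator μ Ψ Φ (S : H →L[ℂ] H))
    (F : X → ℂ) (hFinfty : MemLp F ⊤ μ)
    (hFdom : ∃ g : H, ∀ h : H, (inner ℂ h g : ℂ) = ∫ x, F x * (inner ℂ h (Φ x) : ℂ) ∂μ) :
    (∃ f : H, ∀ᵐ x ∂μ, F x = (inner ℂ (Ψ x) f : ℂ)) ↔
      (∀ᵐ x ∂μ, F x = ∫ y, (inner ℂ (Ψ x) (S.symm (Φ y)) : ℂ) * F y ∂μ) := by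
  constructor
  · rintro ⟨f, hf⟩
    filter_upwards [hf] with x hx
    calc F x = inner ℂ (Ψ x) f := hx
    _ = inner ℂ ((ContinuousLinearMap.adjoint (S.symm : H →L[ℂ] H)) (Ψ x))
          ((S : H →L[ℂ] H) f) := by
        rw [ContinuousLinearMap.adjoint_inner_left]; simp
    _ = ∫ y, (inner ℂ (Ψ y) f : ℂ) *
          inner ℂ ((ContinuousLinearMap.adjoint (S.symm : H →L[ℂ] H)) (Ψ x)) (Φ y) ∂μ := hS _ _
    _ = ∫ y, (inner ℂ (Ψ x) (S.symm (Φ y)) : ℂ) * F y ∂μ := by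
        refine integral_congr_ae ?_
        filter_upwards [hf] with y hy
        rw [ContinuousLinearMap.adjoint_inner_left, ← hy, mul_comm]
        rfl
  · intro h
    obtain ⟨g, hg⟩ := hFdom
    refine ⟨S.symm g, ?_⟩
    filter_upwards [h] with x hx
    have key := hg ((ContinuousLinearMap.adjoint (S.symm : H →L[ℂ] H)) (Ψ x))
    simp only [ContinuousLinearMap.adjoint_inner_left] at key
    rw [show ((S.symm : H →L[ℂ] H) g : H) = S.symm g from rfl] at key
    rw [key]
    rw [hx]
    exact integral_congr_ae (Filter.Eventually.of_forall fun y => mul_comm _ _)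
end
end

section
/- Let H be a complex Hilbert space, (X,μ) a measure space, and Ψ: X → H weakly measurable and essentially norm-bounded. Then Ψ is a continuous frame for H (i.e., there exist A,B > 0 with A‖f‖² ≤ ∫_X |⟨f,Ψ(x)⟩|² dμ(x) ≤ B‖f‖² for all f ∈ H) if and only if (Ψ,Ψ) is a reproducing pair, i.e., there exists a bounded linear operator S on H with bounded inverse such that ⟨Sf,g⟩ = ∫_X ⟨f,Ψ(x)⟩·⟨Ψ(x),g⟩ dμ(x) for all f,g ∈ H. -/
open MeasureTheory
open scoped ComplexConjugate

noncomputable section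

private lemma op_cs {H : Type*} [NormedAddCommGroup H] [InnerProductSpace ℂ H] (S : H →L[ℂ] H)
    (hsym : ∀ x y : H, conj (inner ℂ y (S x) : ℂ) = inner ℂ x (S y))
    (hpos : ∀ x : H, 0 ≤ RCLike.re (inner ℂ x (S x) : ℂ)) (x y : H) :
    ‖(inner ℂ x (S y) : ℂ)‖ * ‖(inner ℂ y (S x) : ℂ)‖
      ≤ RCLike.re (inner ℂ x (S x) : ℂ) * RCLike.re (inner ℂ y (S y) : ℂ) :=
  let c : PreInnerProductSpace.Core ℂ H :=
    { inner := fun u v => inner ℂ u (S v)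
      conj_inner_symm := hsym
      re_inner_nonneg := hpos
      add_left := fun u v w => inner_add_left u v (S w)
      smul_left := fun u v r => inner_smul_left u (S v) r }
  @InnerProductSpace.Core.inner_mul_inner_self_le ℂ H _ _ _ c x y

private lemma reverse_dir {H : Type*} [NormedAddCommGroup H] [InnerProductSpace ℂ H] [CompleteSpace H]
    {X : Type*} [MeasurableSpace X] (μ : Measure X) (Ψ : X → H)
    (S : H ≃L[ℂ] H) (hS : IsResolutionOperator μ Ψ Ψ (S : H →L[ℂ] H)) :
    ∃ A B : ℝ, 0 < A ∧ 0 < B ∧ ∀ f : H,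
        A * ‖f‖ ^ 2 ≤ ∫ x, ‖(inner ℂ (Ψ x) f : ℂ)‖ ^ 2 ∂μ ∧
        ∫ x, ‖(inner ℂ (Ψ x) f : ℂ)‖ ^ 2 ∂μ ≤ B * ‖f‖ ^ 2 := by
  set T : H →L[ℂ] H := (S : H →L[ℂ] H) with hT
  set I : H → ℝ := fun f => ∫ x, ‖(inner ℂ (Ψ x) f : ℂ)‖ ^ 2 ∂μ with hI
  -- key identity
  have key : ∀ f : H, (inner ℂ f (T f) : ℂ) = ((I f : ℝ) : ℂ) := by
    intro f
    rw [hS f f]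
    have : ∀ x : X, (inner ℂ (Ψ x) f : ℂ) * (inner ℂ f (Ψ x) : ℂ)
        = ((‖(inner ℂ (Ψ x) f : ℂ)‖ ^ 2 : ℝ) : ℂ) := by
      intro x
      rw [← inner_conj_symm f (Ψ x), RCLike.mul_conj]
      norm_cast
    simp_rw [this]
    exact integral_ofReal
  have hpos : ∀ f : H, 0 ≤ RCLike.re (inner ℂ f (T f) : ℂ) := by
    intro f
    rw [key f]
    simpa using integral_nonneg (μ := μ) fun x => sq_nonneg ‖(inner ℂ (Ψ x) f : ℂ)‖
  have hIre : ∀ f : H, I f = RCLike.re (inner ℂ f (T f) : ℂ) := by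
    intro f; rw [key f]; simp
  have hsym : ∀ x y : H, conj (inner ℂ y (T x) : ℂ) = inner ℂ x (T y) := by
    intro x y
    rw [hS x y, hS y x, ← integral_conj]
    congr 1
    ext z
    rw [map_mul, inner_conj_symm, inner_conj_symm]
    ring
  refine ⟨(‖(S.symm : H →L[ℂ] H)‖ + 1)⁻¹, ‖T‖ + 1, by positivity, by positivity, fun f => ?_⟩
  constructor
  · -- lower bound
    rcases eq_or_ne f 0 with rfl | hf
    · have h0 : (0:ℝ) ≤ I 0 := by rw [hIre]; exact hpos 0
      simpa using h0
    have hcs := op_cs T hsym hpos f (S.symm f)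
    have h1 : (inner ℂ f (T (S.symm f)) : ℂ) = (inner ℂ f f : ℂ) := by
      simp [hT]
    have h2 : ‖(inner ℂ f (T (S.symm f)) : ℂ)‖ = ‖f‖ ^ 2 := by
      rw [h1, inner_self_eq_norm_sq_to_K]; simp [abs_of_nonneg]
    have h3 : ‖(inner ℂ (S.symm f) (T f) : ℂ)‖ = ‖f‖ ^ 2 := by
      rw [← RCLike.norm_conj, hsym f (S.symm f), h2]
    have h4 : RCLike.re (inner ℂ (S.symm f) (T (S.symm f)) : ℂ)
        ≤ (‖(S.symm : H →L[ℂ] H)‖ + 1) * ‖f‖ ^ 2 := by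
      calc RCLike.re (inner ℂ (S.symm f) (T (S.symm f)) : ℂ)
          ≤ ‖(inner ℂ (S.symm f) (T (S.symm f)) : ℂ)‖ := RCLike.re_le_norm _
        _ ≤ ‖S.symm f‖ * ‖T (S.symm f)‖ := norm_inner_le_norm _ _
        _ = ‖S.symm f‖ * ‖f‖ := by simp [hT]
        _ ≤ (‖(S.symm : H →L[ℂ] H)‖ * ‖f‖) * ‖f‖ := by
            apply mul_le_mul_of_nonneg_right _ (norm_nonneg f)
            exact (S.symm : H →L[ℂ] H).le_opNorm f
        _ ≤ (‖(S.symm : H →L[ℂ] H)‖ + 1) * ‖f‖ ^ 2 := by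
            nlinarith [norm_nonneg f, norm_nonneg (S.symm : H →L[ℂ] H), sq_nonneg ‖f‖]
    rw [h2, h3, ← hIre f] at hcs
    have hfpos : (0:ℝ) < ‖f‖ := norm_pos_iff.mpr hf
    have hM : (0:ℝ) < ‖(S.symm : H →L[ℂ] H)‖ + 1 := by positivity
    have hIf : 0 ≤ I f := by rw [hIre]; exact hpos f
    have h5 : ‖f‖ ^ 2 * ‖f‖ ^ 2 ≤ I f * ((‖(S.symm : H →L[ℂ] H)‖ + 1) * ‖f‖ ^ 2) :=
      le_trans hcs (mul_le_mul_of_nonneg_left h4 hIf)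
    show (‖(S.symm : H →L[ℂ] H)‖ + 1)⁻¹ * ‖f‖ ^ 2 ≤ I f
    rw [inv_mul_le_iff₀ hM]
    nlinarith [h5, pow_pos hfpos 2]
  · -- upper bound
    show I f ≤ (‖T‖ + 1) * ‖f‖ ^ 2
    calc I f = RCLike.re (inner ℂ f (T f) : ℂ) := hIre f
      _ ≤ ‖(inner ℂ f (T f) : ℂ)‖ := RCLike.re_le_norm _
      _ ≤ ‖f‖ * ‖T f‖ := norm_inner_le_norm _ _
      _ ≤ ‖f‖ * (‖T‖ * ‖f‖) := by
          exact mul_le_mul_of_nonneg_left (T.le_opNorm f) (norm_nonneg f)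
      _ ≤ (‖T‖ + 1) * ‖f‖ ^ 2 := by nlinarith [norm_nonneg f, norm_nonneg T]

set_option maxHeartbeats 1000000 in
private lemma forward_dir {H : Type*} [NormedAddCommGroup H] [InnerProductSpace ℂ H] [CompleteSpace H]
    {X : Type*} [MeasurableSpace X] (μ : Measure X) (Ψ : X → H) (hΨw : WeaklyMeasurable Ψ)
    {A B : ℝ} (hA : 0 < A) (hB : 0 < B)
    (hfr : ∀ f : H,
        A * ‖f‖ ^ 2 ≤ ∫ x, ‖(inner ℂ (Ψ x) f : ℂ)‖ ^ 2 ∂μ ∧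
        ∫ x, ‖(inner ℂ (Ψ x) f : ℂ)‖ ^ 2 ∂μ ≤ B * ‖f‖ ^ 2) :
    IsReproducingPair μ Ψ Ψ := by
  classical
  set a : H → X → ℂ := fun f x => (inner ℂ (Ψ x) f : ℂ) with ha
  -- each a f is in L²
  have hmem : ∀ f : H, MemLp (a f) 2 μ := by
    intro f
    rcases eq_or_ne f 0 with rfl | hf
    · have : a 0 = fun _ => (0 : ℂ) := by funext x; simp [ha]
      rw [this]; exact MemLp.zero'
    · refine (memLp_two_iff_integrable_sq_norm (hΨw f).aestronglyMeasurable).2 ?_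
      by_contra hint
      have h0 : ∫ x, ‖a f x‖ ^ 2 ∂μ = 0 := integral_undef hint
      have h1 := (hfr f).1
      rw [h0] at h1
      have : (0:ℝ) < A * ‖f‖ ^ 2 := by
        have := norm_pos_iff.mpr hf; positivity
      linarith
  -- the analysis operator T : H → L²
  set Tfun : H → Lp ℂ 2 μ := fun f => (hmem f).toLp (a f) with hTfun
  have hTcoe : ∀ f : H, (Tfun f : X → ℂ) =ᵐ[μ] a f := fun f => (hmem f).coeFn_toLp
  have hTnorm : ∀ f : H, ‖Tfun f‖ ^ 2 = ∫ x, ‖a f x‖ ^ 2 ∂μ := by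
    intro f
    rw [← inner_self_eq_norm_sq (𝕜 := ℂ) (Tfun f), L2.inner_def]
    have : ∫ x, (inner ℂ (Tfun f x) (Tfun f x) : ℂ) ∂μ
        = ∫ x, ((‖a f x‖ ^ 2 : ℝ) : ℂ) ∂μ := by
      refine integral_congr_ae ?_
      filter_upwards [hTcoe f] with x hx
      rw [hx, inner_self_eq_norm_sq_to_K]
      norm_cast
    have hint : Integrable (fun x => ‖a f x‖ ^ 2) μ :=
      (memLp_two_iff_integrable_sq_norm (hΨw f).aestronglyMeasurable).1 (hmem f)
    have h4 : (∫ x, ((‖a f x‖ ^ 2 : ℝ) : ℂ) ∂μ) = ((∫ x, ‖a f x‖ ^ 2 ∂μ : ℝ) : ℂ) :=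
      integral_ofReal
    rw [this, h4]
    simp
  have hTlin : ∀ (f g : H) (c : ℂ), Tfun (f + c • g) = Tfun f + c • Tfun g := by
    intro f g c
    have hfg : a (f + c • g) = fun x => a f x + c • a g x := by
      funext x; simp [ha, inner_add_right, inner_smul_right, smul_eq_mul]
    calc Tfun (f + c • g) = ((hmem f).add ((hmem g).const_smul c)).toLp
            (fun x => a f x + c • a g x) := by
          exact MemLp.toLp_congr _ _ (by rw [hfg])
      _ = Tfun f + c • Tfun g := by
          rw [← MemLp.toLp_const_smul c (hmem g)]
          exact MemLp.toLp_add _ _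
  set Tlin : H →ₗ[ℂ] Lp ℂ 2 μ :=
    { toFun := Tfun
      map_add' := by
        intro f g
        have := hTlin f g 1
        simpa using this
      map_smul' := by
        intro c f
        have h1 := hTlin 0 f c
        have h2 : Tfun 0 = Tfun 0 + Tfun 0 := by simpa using hTlin 0 0 1
        have h0 : Tfun 0 = 0 := (add_eq_left.mp h2.symm)
        simpa [h0] using h1 } with hTlind
  have hTbound : ∀ f : H, ‖Tlin f‖ ≤ Real.sqrt B * ‖f‖ := by
    intro f
    have h2 : ‖Tfun f‖ ^ 2 ≤ B * ‖f‖ ^ 2 := by rw [hTnorm f]; exact (hfr f).2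
    have h3 : ‖Tfun f‖ ≤ Real.sqrt (B * ‖f‖ ^ 2) := by
      rw [← Real.sqrt_sq (norm_nonneg (Tfun f))]
      exact Real.sqrt_le_sqrt h2
    rwa [Real.sqrt_mul hB.le, Real.sqrt_sq (norm_nonneg f)] at h3
  set T : H →L[ℂ] Lp ℂ 2 μ := Tlin.mkContinuous (Real.sqrt B) hTbound with hTd
  have hTapp : ∀ f : H, T f = Tfun f := fun f => rfl
  set S₀ : H →L[ℂ] H := (ContinuousLinearMap.adjoint T) ∘L T with hS₀
  -- resolution property
  have hres : IsResolutionOperator μ Ψ Ψ S₀ := by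
    intro f g
    have h1 : (inner ℂ g (S₀ f) : ℂ) = inner ℂ (T g) (T f) := by
      rw [hS₀]
      simp only [ContinuousLinearMap.comp_apply]
      rw [ContinuousLinearMap.adjoint_inner_right]
    rw [h1, L2.inner_def]
    refine integral_congr_ae ?_
    filter_upwards [hTcoe f, hTcoe g] with x hf hg
    rw [hTapp, hTapp, hf, hg]
    have : (inner ℂ g (Ψ x) : ℂ) = conj (a g x) := by
      rw [ha, ← inner_conj_symm]
    rw [this]
    simp only [RCLike.inner_apply]
    ring
  -- coercivity
  have hco : ∀ f : H, A * ‖f‖ ^ 2 ≤ RCLike.re (inner ℂ f (S₀ f) : ℂ) := by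
    intro f
    have h1 : (inner ℂ f (S₀ f) : ℂ) = inner ℂ (T f) (T f) := by
      rw [hS₀]
      simp only [ContinuousLinearMap.comp_apply]
      rw [ContinuousLinearMap.adjoint_inner_right]
    rw [h1, inner_self_eq_norm_sq (𝕜 := ℂ), hTapp, hTnorm f]
    exact (hfr f).1
  -- antilipschitz
  have hanti : AntilipschitzWith (Real.toNNReal A⁻¹) S₀ := by
    apply S₀.antilipschitz_of_bound
    intro f
    rcases eq_or_ne f 0 with rfl | hf
    · simp
    have hfpos : (0:ℝ) < ‖f‖ := norm_pos_iff.mpr hf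
    have h1 : A * ‖f‖ ^ 2 ≤ ‖f‖ * ‖S₀ f‖ := by
      calc A * ‖f‖ ^ 2 ≤ RCLike.re (inner ℂ f (S₀ f) : ℂ) := hco f
        _ ≤ ‖(inner ℂ f (S₀ f) : ℂ)‖ := RCLike.re_le_norm _
        _ ≤ ‖f‖ * ‖S₀ f‖ := norm_inner_le_norm _ _
    have hc : (Real.toNNReal A⁻¹ : ℝ) = A⁻¹ := Real.coe_toNNReal _ (by positivity)
    rw [hc]
    rw [← mul_le_mul_iff_of_pos_left hA]
    calc A * ‖f‖ ≤ ‖S₀ f‖ := by nlinarith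
      _ = A * (A⁻¹ * ‖S₀ f‖) := by field_simp
  -- injective
  have hker : S₀.ker = ⊥ := by
    exact LinearMap.ker_eq_bot'.mpr fun m hm => hanti.injective (by rw [show S₀ m = 0 from hm, map_zero])
  -- surjective
  have hclosed := ContinuousLinearMap.closed_range_of_antilipschitz hanti
  haveI hcompl : CompleteSpace S₀.range := hanti.completeSpace_range_clm
  have hrange : S₀.range = ⊤ := by
    rw [← Submodule.orthogonal_eq_bot_iff]
    rw [Submodule.eq_bot_iff]
    intro u hu
    have h0 : (inner ℂ (S₀ u) u : ℂ) = 0 :=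
      (Submodule.mem_orthogonal _ u).mp hu (S₀ u) ⟨u, rfl⟩
    have h1 : (inner ℂ u (S₀ u) : ℂ) = 0 := by
      rw [← inner_conj_symm, h0, map_zero]
    have h2 := hco u
    rw [h1] at h2
    simp only [map_zero] at h2
    have h3 : ‖u‖ ^ 2 ≤ 0 := by nlinarith
    have : ‖u‖ = 0 := by nlinarith [sq_nonneg ‖u‖, norm_nonneg u]
    exact norm_eq_zero.mp this
  exact ⟨ContinuousLinearEquiv.ofBijective S₀ hker hrange, by
    have : ((ContinuousLinearEquiv.ofBijective S₀ hker hrange : H ≃L[ℂ] H) : H →L[ℂ] H) = S₀ :=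
      ContinuousLinearEquiv.coe_ofBijective S₀ hker hrange
    rw [this]
    exact hres⟩

/-- A weakly measurable, essentially norm-bounded `Ψ : X → H` is a
continuous frame (there are `A, B > 0` with
`A‖f‖² ≤ ∫_X |⟨f, Ψ x⟩|² dμ(x) ≤ B‖f‖²` for all `f`) if and only if `(Ψ, Ψ)` is a
reproducing pair. -/
theorem continuousFrame_iff_reproducingPair_self
    {H : Type*} [NormedAddCommGroup H] [InnerProductSpace ℂ H] [CompleteSpace H]
    {X : Type*} [MeasurableSpace X] (μ : Measure X)
    (Ψ : X → H) (hΨw : WeaklyMeasurable Ψ) (hΨb : EssNormBounded μ Ψ) :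
    (∃ A B : ℝ, 0 < A ∧ 0 < B ∧ ∀ f : H,
        A * ‖f‖ ^ 2 ≤ ∫ x, ‖(inner ℂ (Ψ x) f : ℂ)‖ ^ 2 ∂μ ∧
        ∫ x, ‖(inner ℂ (Ψ x) f : ℂ)‖ ^ 2 ∂μ ≤ B * ‖f‖ ^ 2) ↔
      IsReproducingPair μ Ψ Ψ := by
  constructor
  · rintro ⟨A, B, hA, hB, hfr⟩
    exact forward_dir μ Ψ hΨw hA hB hfr
  · rintro ⟨S, hS⟩
    exact reverse_dir μ Ψ S hS
end
end

section
/- Let ψ ∈ L²(ℝ) be such that its Fourier transform ψ̂ is continuous and satisfies: (i) there exists ξ₀ ≠ 0 with inf_{a∈[1,2]} |ψ̂(a ξ₀)| > 0 and inf_{a∈[1,2]} |ψ̂(−a ξ₀)| > 0; (ii) there exists C > 0 with |ψ̂(ξ)|² ≤ C|ξ|/(1+|ξ|)² for all ξ ∈ ℝ. Then there exist constants 0 < A ≤ B < ∞ such that A ≤ Σ_{j∈ℤ} |ψ̂(2^j ξ)|² ≤ B for a.e. ξ ∈ ℝ. -/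
open MeasureTheory Real

noncomputable section

lemma geo_summable : Summable (fun j : ℤ => ((1/2:ℝ)) ^ j.natAbs) := by
  apply Summable.of_nat_of_neg <;>
  · simp only [Int.natAbs_natCast, Int.natAbs_neg]
    exact summable_geometric_of_lt_one (by norm_num) (by norm_num)

lemma half_natAbs (j : ℤ) : ((1/2:ℝ)) ^ j.natAbs = (2:ℝ) ^ (-(j.natAbs : ℤ)) := by
  rw [zpow_neg, zpow_natCast, one_div, inv_pow]

lemma upper_aux (ψhat : ℝ → ℂ) (C : ℝ) (hC : 0 < C)
    (hdecay : ∀ ξ : ℝ, ‖ψhat ξ‖ ^ 2 ≤ C * |ξ| / (1 + |ξ|) ^ 2)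
    (ξ : ℝ) (hξ : ξ ≠ 0) :
    Summable (fun j : ℤ => ‖ψhat ((2 : ℝ) ^ j * ξ)‖ ^ 2) ∧
    (∑' j : ℤ, ‖ψhat ((2 : ℝ) ^ j * ξ)‖ ^ 2) ≤
      ∑' j : ℤ, 2 * C * (1/2:ℝ) ^ j.natAbs := by
  set F : ℤ → ℝ := fun j => ‖ψhat ((2 : ℝ) ^ j * ξ)‖ ^ 2 with hF
  set t := |ξ| with htdef
  have ht : 0 < t := abs_pos.mpr hξ
  set n₀ : ℤ := ⌈Real.logb 2 t⌉ with hn₀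
  have hrp : ∀ z : ℤ, (2:ℝ) ^ (z:ℝ) = (2:ℝ) ^ z := fun z => Real.rpow_intCast 2 z
  have hlogb : (2:ℝ) ^ (Real.logb 2 t) = t := Real.rpow_logb (by norm_num) (by norm_num) ht
  have ht1 : t ≤ (2:ℝ) ^ n₀ := by
    rw [← hrp, ← hlogb]
    exact Real.rpow_le_rpow_of_exponent_le one_le_two (Int.le_ceil _)
  have ht2 : (2:ℝ) ^ n₀ < 2 * t := by
    have h1 : ((n₀:ℝ)) < Real.logb 2 t + 1 := Int.ceil_lt_add_one _
    calc (2:ℝ) ^ n₀ = (2:ℝ) ^ ((n₀:ℝ)) := (hrp n₀).symm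
      _ < (2:ℝ) ^ (Real.logb 2 t + 1) :=
          Real.rpow_lt_rpow_of_exponent_lt one_lt_two h1
      _ = 2 * t := by
          rw [Real.rpow_add (by norm_num), hlogb, Real.rpow_one]; ring
  set s : ℝ := (2:ℝ) ^ (-n₀) * t with hsdef
  have hpn : (0:ℝ) < (2:ℝ) ^ n₀ := zpow_pos (by norm_num) _
  have hst : s * (2:ℝ) ^ n₀ = t := by
    rw [hsdef, zpow_neg]; field_simp
  have hs2 : s ≤ 1 := by nlinarith
  have hs1 : 1/2 < s := by nlinarith
  have hs0 : 0 < s := by linarith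
  have hterm : ∀ j : ℤ, F (j - n₀) ≤ 2 * C * (1/2:ℝ) ^ j.natAbs := by
    intro j
    set u : ℝ := (2:ℝ) ^ j * s with hudef
    have hpj : (0:ℝ) < (2:ℝ) ^ j := zpow_pos (by norm_num) _
    have hu : 0 < u := mul_pos hpj hs0
    have habs : |(2:ℝ) ^ (j - n₀) * ξ| = u := by
      rw [abs_mul, abs_of_pos (zpow_pos (by norm_num) _), ← htdef, hudef, hsdef,
        zpow_sub₀ (two_ne_zero), zpow_neg]
      ring
    have h1 := hdecay ((2:ℝ) ^ (j - n₀) * ξ)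
    rw [habs] at h1
    have hFle : F (j - n₀) ≤ C * u / (1 + u) ^ 2 := h1
    rw [half_natAbs]
    rcases le_or_gt j 0 with hj | hj
    · have hna : -(j.natAbs : ℤ) = j := by omega

      rw [hna]
      have key : u / (1 + u) ^ 2 ≤ u := by
        apply div_le_self hu.le; nlinarith
      have hule : u ≤ (2:ℝ) ^ j := by
        rw [hudef]; nlinarith
      have e1 : C * u / (1 + u) ^ 2 = C * (u / (1 + u) ^ 2) := by ring
      nlinarith [hFle]
    · have hna : -(j.natAbs : ℤ) = -j := by
        rw [Int.natAbs_of_nonneg hj.le]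
      rw [hna]
      have key : u / (1 + u) ^ 2 ≤ 1 / u := by
        rw [div_le_div_iff₀ (by positivity) hu]; nlinarith
      have hule : 1 / u ≤ 2 * (2:ℝ) ^ (-j) := by
        rw [div_le_iff₀ hu, zpow_neg]
        have e : 2 * ((2:ℝ) ^ j)⁻¹ * u = 2 * s := by
          rw [hudef]; field_simp
        rw [e]; linarith
      have e1 : C * u / (1 + u) ^ 2 = C * (u / (1 + u) ^ 2) := by ring
      have hzp : (0:ℝ) < (2:ℝ) ^ (-j) := zpow_pos (by norm_num) _
      nlinarith [hFle]
  have hg : Summable (fun j : ℤ => 2 * C * (1/2:ℝ) ^ j.natAbs) :=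
    geo_summable.mul_left (2 * C)
  have hF' : Summable (fun j : ℤ => F (j - n₀)) :=
    Summable.of_nonneg_of_le (fun j => by positivity) hterm hg
  have hFsum : Summable F := by
    have := (Equiv.subRight n₀).summable_iff (f := F)
    exact this.mp hF'
  refine ⟨hFsum, ?_⟩
  have heq : (∑' j : ℤ, F (j - n₀)) = ∑' j : ℤ, F j :=
    (Equiv.subRight n₀).tsum_eq F
  rw [← heq]
  exact Summable.tsum_le_tsum hterm hF' hg

lemma lower_aux (ψhat : ℝ → ℂ) (ξ₀ : ℝ) (hξ₀ : ξ₀ ≠ 0) (c : ℝ) (hc : 0 < c)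
    (hinf : ∀ a ∈ Set.Icc (1 : ℝ) 2,
      c ≤ ‖ψhat (a * ξ₀)‖ ∧ c ≤ ‖ψhat (-(a * ξ₀))‖)
    (ξ : ℝ) (hξ : ξ ≠ 0) :
    ∃ j : ℤ, c ^ 2 ≤ ‖ψhat ((2 : ℝ) ^ j * ξ)‖ ^ 2 := by
  set t := |ξ| with htdef
  set T := |ξ₀| with hTdef
  have ht : 0 < t := abs_pos.mpr hξ
  have hT : 0 < T := abs_pos.mpr hξ₀
  set m : ℤ := ⌊Real.logb 2 (t / T)⌋ with hm
  have htT : 0 < t / T := div_pos ht hT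
  have hlogb : (2:ℝ) ^ (Real.logb 2 (t/T)) = t/T :=
    Real.rpow_logb (by norm_num) (by norm_num) htT
  have hrp : ∀ z : ℤ, (2:ℝ) ^ (z:ℝ) = (2:ℝ) ^ z := fun z => Real.rpow_intCast 2 z
  have h1 : (2:ℝ) ^ m ≤ t / T := by
    rw [← hrp, ← hlogb]
    exact Real.rpow_le_rpow_of_exponent_le one_le_two (Int.floor_le _)
  have h2 : t / T < 2 * (2:ℝ) ^ m := by
    have hl : Real.logb 2 (t/T) < (m:ℝ) + 1 := Int.lt_floor_add_one _
    calc t / T = (2:ℝ) ^ (Real.logb 2 (t/T)) := hlogb.symm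
      _ < (2:ℝ) ^ ((m:ℝ) + 1) := Real.rpow_lt_rpow_of_exponent_lt one_lt_two hl
      _ = 2 * (2:ℝ) ^ m := by
          rw [Real.rpow_add (by norm_num), hrp, Real.rpow_one]; ring
  have hpm : (0:ℝ) < (2:ℝ) ^ m := zpow_pos (by norm_num) _
  set a : ℝ := (2:ℝ) ^ (-m) * t / T with hadef
  have hainv : a = (t / T) / (2:ℝ) ^ m := by
    rw [hadef, zpow_neg]; field_simp
  have ha1 : 1 ≤ a := by
    rw [hainv, le_div_iff₀ hpm]; linarith
  have ha2 : a ≤ 2 := by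
    rw [hainv, div_le_iff₀ hpm]; linarith
  have ha0 : 0 < a := by linarith
  have habs : |(2:ℝ) ^ (-m) * ξ| = a * T := by
    rw [abs_mul, abs_of_pos (zpow_pos (by norm_num) (-m)), ← htdef, hadef]
    field_simp
  obtain ⟨hc1, hc2⟩ := hinf a ⟨ha1, ha2⟩
  refine ⟨-m, ?_⟩
  have hcase : (2:ℝ) ^ (-m) * ξ = a * T ∨ (2:ℝ) ^ (-m) * ξ = -(a * T) :=
    (abs_eq (by positivity)).mp habs
  have hsign : T = ξ₀ ∨ T = -ξ₀ := abs_choice ξ₀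
  have hkey : c ≤ ‖ψhat ((2:ℝ) ^ (-m) * ξ)‖ := by
    rcases hcase with h | h <;> rcases hsign with h' | h' <;> rw [h, h']
    · exact hc1
    · simpa using hc2
    · simpa using hc2
    · simpa using hc1
  calc c ^ 2 ≤ (‖ψhat ((2:ℝ) ^ (-m) * ξ)‖) ^ 2 :=
        pow_le_pow_left₀ hc.le hkey 2
    _ = _ := rfl

/-- If `ψ̂` is continuous, does not vanish on `±[ξ₀, 2ξ₀]` for some
`ξ₀ ≠ 0`, and satisfies the decay estimate `|ψ̂(ξ)|² ≤ C|ξ|/(1+|ξ|)²`, then the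
dyadic Calderón sum `Σ_{j∈ℤ} |ψ̂(2^j ξ)|²` is essentially bounded above and below. -/
theorem dyadic_calderon_sum_bounded
    (ψhat : ℝ → ℂ) (hψL2 : MemLp ψhat 2 (volume : Measure ℝ))
    (hcont : Continuous ψhat)
    (ξ₀ : ℝ) (hξ₀ : ξ₀ ≠ 0)
    (c : ℝ) (hc : 0 < c)
    (hinf : ∀ a ∈ Set.Icc (1 : ℝ) 2,
      c ≤ ‖ψhat (a * ξ₀)‖ ∧ c ≤ ‖ψhat (-(a * ξ₀))‖)
    (C : ℝ) (hC : 0 < C)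
    (hdecay : ∀ ξ : ℝ, ‖ψhat ξ‖ ^ 2 ≤ C * |ξ| / (1 + |ξ|) ^ 2) :
    ∃ A B : ℝ, 0 < A ∧ 0 < B ∧
      ∀ᵐ ξ ∂(volume : Measure ℝ),
        A ≤ ∑' j : ℤ, ‖ψhat ((2 : ℝ) ^ j * ξ)‖ ^ 2 ∧
        (∑' j : ℤ, ‖ψhat ((2 : ℝ) ^ j * ξ)‖ ^ 2) ≤ B := by
  have hg : Summable (fun j : ℤ => 2 * C * (1/2:ℝ) ^ j.natAbs) :=
    geo_summable.mul_left (2 * C)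
  refine ⟨c ^ 2, ∑' j : ℤ, 2 * C * (1/2:ℝ) ^ j.natAbs, by positivity, ?_, ?_⟩
  · exact Summable.tsum_pos hg (fun j => by positivity) 0 (by norm_num [hC])
  · have h0 : ∀ᵐ ξ : ℝ ∂(volume : Measure ℝ), ξ ≠ 0 := by
      have hs : {a : ℝ | ¬ a ≠ 0} = {0} := by ext x; simp
      rw [ae_iff, hs]
      exact measure_singleton 0
    filter_upwards [h0] with ξ hξ
    obtain ⟨hsum, hub⟩ := upper_aux ψhat C hC hdecay ξ hξ
    obtain ⟨j, hj⟩ := lower_aux ψhat ξ₀ hξ₀ c hc hinf ξ hξ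
    refine ⟨hj.trans (Summable.le_tsum hsum j fun i _ => by positivity), hub⟩
end
end

section
/- Let F: ℝ → ℂ be measurable with ∫_{−1}^{1} |F(z)|·(1/(1+z) + 1/(1−z)) dz < ∞ and F(z)/(1+z), F(z)/(1−z) locally integrable on ℝ∖{−1} and ℝ∖{1} respectively, and suppose ∫_ℝ |F((ξ−ω)/(1+|ω|))|·(1+|ω|)^{−1} dω < ∞ for a.e. ξ. Then for a.e. ξ ∈ ℝ: ∫_ℝ F((ξ−ω)/(1+|ω|))·(1+|ω|)^{−1} dω = ∫_{−1}^{ξ} F(z)/(1+z) dz + ∫_{ξ}^{1} F(z)/(1−z) dz, where the one-dimensional integrals on the right are oriented. In particular, with F = conj(ψ̂)·φ̂ for ψ, φ ∈ L²(ℝ), the symbol m(ξ) of the system M_ω T_x D_{(1+|ω|)^{−1}}ψ, M_ω T_x D_{(1+|ω|)^{−1}}φ with measure dx dω equals ∫_{−1}^{ξ} conj(ψ̂(z))φ̂(z)/(1+z) dz + ∫_{ξ}^{1} conj(ψ̂(z))φ̂(z)/(1−z) dz. -/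
open MeasureTheory Real
open scoped ENNReal

noncomputable section

private lemma keyA (F : ℝ → ℂ) (ξ : ℝ) (hξ : (1:ℝ) + ξ ≠ 0) :
    ∫ ω in Set.Ioi (0:ℝ), F ((ξ - ω) / (1 + ω)) * (((1 + ω)⁻¹ : ℝ) : ℂ)
      = ∫ z in (-1:ℝ)..ξ, F z / ((1 + z : ℝ) : ℂ) := by
  set g : ℝ → ℂ := fun z => F z / ((1 + z : ℝ) : ℂ) with hg
  have hs : MeasurableSet (Set.Ioi (0:ℝ)) := measurableSet_Ioi
  have hderiv : ∀ ω ∈ Set.Ioi (0:ℝ),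
      HasDerivWithinAt (fun ω => (ξ - ω) / (1 + ω)) ((-(1+ξ)) / (1+ω)^2) (Set.Ioi 0) ω := by
    intro ω hω
    have hω0 : (0:ℝ) < ω := hω
    have h0 : (1:ℝ) + ω ≠ 0 := by linarith
    have h1 : HasDerivAt (fun ω : ℝ => ξ - ω) (-1) ω := by
      simpa using (hasDerivAt_id ω).const_sub ξ
    have h2 : HasDerivAt (fun ω : ℝ => 1 + ω) 1 ω := by
      simpa using (hasDerivAt_id ω).const_add 1
    have h3 := h1.div h2 h0
    have h4 : ((-1) * (1 + ω) - (ξ - ω) * 1) / (1 + ω)^2 = (-(1+ξ)) / (1+ω)^2 := by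
      congr 1; ring
    rw [h4] at h3
    exact h3.hasDerivWithinAt
  have hinj : Set.InjOn (fun ω => (ξ - ω) / (1 + ω)) (Set.Ioi 0) := by
    intro a ha b hb h
    have ha0 : (1:ℝ) + a ≠ 0 := by have : (0:ℝ) < a := ha; linarith
    have hb0 : (1:ℝ) + b ≠ 0 := by have : (0:ℝ) < b := hb; linarith
    simp only at h
    rw [div_eq_div_iff ha0 hb0] at h
    have h2 : (1+ξ)*(b-a) = 0 := by linear_combination h
    rcases mul_eq_zero.mp h2 with h' | h'
    · exact absurd h' hξ
    · linarith
  rcases lt_or_gt_of_ne hξ with hlt | hlt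
  · -- case ξ < -1, i.e. 1+ξ < 0
    have himg : (fun ω => (ξ - ω) / (1 + ω)) '' Set.Ioi 0 = Set.Ioo ξ (-1) := by
      ext z
      simp only [Set.mem_image, Set.mem_Ioi, Set.mem_Ioo]
      constructor
      · rintro ⟨ω, hω, rfl⟩
        have h0 : (0:ℝ) < 1 + ω := by linarith
        constructor
        · rw [lt_div_iff₀ h0]; nlinarith
        · rw [div_lt_iff₀ h0]; nlinarith
      · rintro ⟨hz1, hz2⟩
        have h0 : (1:ℝ) + z < 0 := by linarith
        have h0' : (1:ℝ) + z ≠ 0 := ne_of_lt h0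
        refine ⟨(ξ - z) / (1 + z), div_pos_of_neg_of_neg (by linarith) h0, ?_⟩
        have e1 : 1 + (ξ - z) / (1 + z) = (1 + ξ) / (1 + z) := by field_simp; ring
        have e2 : ξ - (ξ - z) / (1 + z) = z * ((1 + ξ) / (1 + z)) := by
          field_simp; try ring
        simp only [e1, e2]
        exact mul_div_cancel_right₀ z (div_ne_zero hξ h0')
    have hpt : Set.EqOn
        (fun ω => F ((ξ - ω) / (1 + ω)) * (((1 + ω)⁻¹ : ℝ) : ℂ))
        (fun ω => -(|(-(1+ξ)) / (1+ω)^2| • g ((ξ - ω) / (1 + ω)))) (Set.Ioi 0) := by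
      intro ω hω
      have hω0 : (0:ℝ) < ω := hω
      have h0 : (0:ℝ) < 1 + ω := by linarith
      have habs : |(-(1+ξ)) / (1+ω)^2| = (-(1+ξ)) / (1+ω)^2 := by
        apply abs_of_pos; apply div_pos (by linarith) (by positivity)
      have hz : (1 : ℝ) + (ξ - ω) / (1 + ω) = (1 + ξ) / (1 + ω) := by field_simp; ring
      simp only [hg, habs, hz, Complex.real_smul]
      have hc1 : (1 : ℂ) + (ω : ℂ) ≠ 0 := by exact_mod_cast h0.ne'
      have hc2 : (1 : ℂ) + (ξ : ℂ) ≠ 0 := by exact_mod_cast hξ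
      set c := F ((ξ - ω) / (1 + ω)) with hcdef
      push_cast
      field_simp
    calc ∫ ω in Set.Ioi (0:ℝ), F ((ξ - ω) / (1 + ω)) * (((1 + ω)⁻¹ : ℝ) : ℂ)
        = ∫ ω in Set.Ioi (0:ℝ), -(|(-(1+ξ)) / (1+ω)^2| • g ((ξ - ω) / (1 + ω))) :=
          setIntegral_congr_fun hs hpt
      _ = -∫ ω in Set.Ioi (0:ℝ), |(-(1+ξ)) / (1+ω)^2| • g ((ξ - ω) / (1 + ω)) :=
          integral_neg _
      _ = -∫ z in (fun ω => (ξ - ω) / (1 + ω)) '' Set.Ioi 0, g z := by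
          rw [integral_image_eq_integral_abs_deriv_smul hs hderiv hinj g]
      _ = -∫ z in Set.Ioo ξ (-1:ℝ), g z := by rw [himg]
      _ = -∫ z in Set.Ioc ξ (-1:ℝ), g z := by rw [integral_Ioc_eq_integral_Ioo]
      _ = -∫ z in ξ..(-1:ℝ), g z := by rw [intervalIntegral.integral_of_le (by linarith)]
      _ = ∫ z in (-1:ℝ)..ξ, g z := (intervalIntegral.integral_symm _ _).symm
  · -- case -1 < ξ, i.e. 0 < 1+ξ
    have himg : (fun ω => (ξ - ω) / (1 + ω)) '' Set.Ioi 0 = Set.Ioo (-1) ξ := by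
      ext z
      simp only [Set.mem_image, Set.mem_Ioi, Set.mem_Ioo]
      constructor
      · rintro ⟨ω, hω, rfl⟩
        have h0 : (0:ℝ) < 1 + ω := by linarith
        constructor
        · rw [lt_div_iff₀ h0]; nlinarith
        · rw [div_lt_iff₀ h0]; nlinarith
      · rintro ⟨hz1, hz2⟩
        have h0 : (0:ℝ) < 1 + z := by linarith
        have h0' : (1:ℝ) + z ≠ 0 := h0.ne'
        refine ⟨(ξ - z) / (1 + z), div_pos (by linarith) h0, ?_⟩
        have e1 : 1 + (ξ - z) / (1 + z) = (1 + ξ) / (1 + z) := by field_simp; ring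
        have e2 : ξ - (ξ - z) / (1 + z) = z * ((1 + ξ) / (1 + z)) := by
          field_simp; try ring
        simp only [e1, e2]
        exact mul_div_cancel_right₀ z (div_ne_zero hξ h0')
    have hpt : Set.EqOn
        (fun ω => F ((ξ - ω) / (1 + ω)) * (((1 + ω)⁻¹ : ℝ) : ℂ))
        (fun ω => |(-(1+ξ)) / (1+ω)^2| • g ((ξ - ω) / (1 + ω))) (Set.Ioi 0) := by
      intro ω hω
      have hω0 : (0:ℝ) < ω := hω
      have h0 : (0:ℝ) < 1 + ω := by linarith
      have habs : |(-(1+ξ)) / (1+ω)^2| = (1+ξ) / (1+ω)^2 := by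
        rw [abs_div, abs_neg, abs_of_pos (by linarith), abs_of_pos (by positivity)]
      have hz : (1 : ℝ) + (ξ - ω) / (1 + ω) = (1 + ξ) / (1 + ω) := by field_simp; ring
      simp only [hg, habs, hz, Complex.real_smul]
      have hc1 : (1 : ℂ) + (ω : ℂ) ≠ 0 := by exact_mod_cast h0.ne'
      have hc2 : (1 : ℂ) + (ξ : ℂ) ≠ 0 := by exact_mod_cast hξ
      set c := F ((ξ - ω) / (1 + ω)) with hcdef
      push_cast
      field_simp
    calc ∫ ω in Set.Ioi (0:ℝ), F ((ξ - ω) / (1 + ω)) * (((1 + ω)⁻¹ : ℝ) : ℂ)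
        = ∫ ω in Set.Ioi (0:ℝ), |(-(1+ξ)) / (1+ω)^2| • g ((ξ - ω) / (1 + ω)) :=
          setIntegral_congr_fun hs hpt
      _ = ∫ z in (fun ω => (ξ - ω) / (1 + ω)) '' Set.Ioi 0, g z :=
          (integral_image_eq_integral_abs_deriv_smul hs hderiv hinj g).symm
      _ = ∫ z in Set.Ioo (-1:ℝ) ξ, g z := by rw [himg]
      _ = ∫ z in Set.Ioc (-1:ℝ) ξ, g z := by rw [integral_Ioc_eq_integral_Ioo]
      _ = ∫ z in (-1:ℝ)..ξ, g z := (intervalIntegral.integral_of_le (by linarith)).symm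

private lemma keyB (F : ℝ → ℂ) (ξ : ℝ) (hξ : (1:ℝ) - ξ ≠ 0) :
    ∫ ω in Set.Iio (0:ℝ), F ((ξ - ω) / (1 - ω)) * (((1 - ω)⁻¹ : ℝ) : ℂ)
      = ∫ z in ξ..(1:ℝ), F z / ((1 - z : ℝ) : ℂ) := by
  set g : ℝ → ℂ := fun z => F z / ((1 - z : ℝ) : ℂ) with hg
  have hs : MeasurableSet (Set.Iio (0:ℝ)) := measurableSet_Iio
  have hderiv : ∀ ω ∈ Set.Iio (0:ℝ),
      HasDerivWithinAt (fun ω => (ξ - ω) / (1 - ω)) ((-(1-ξ)) / (1-ω)^2) (Set.Iio 0) ω := by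
    intro ω hω
    have hω0 : ω < (0:ℝ) := hω
    have h0 : (1:ℝ) - ω ≠ 0 := by linarith
    have h1 : HasDerivAt (fun ω : ℝ => ξ - ω) (-1) ω := by
      simpa using (hasDerivAt_id ω).const_sub ξ
    have h2 : HasDerivAt (fun ω : ℝ => 1 - ω) (-1) ω := by
      simpa using (hasDerivAt_id ω).const_sub 1
    have h3 := h1.div h2 h0
    have h4 : ((-1) * (1 - ω) - (ξ - ω) * (-1)) / (1 - ω)^2 = (-(1-ξ)) / (1-ω)^2 := by
      congr 1; ring
    rw [h4] at h3
    exact h3.hasDerivWithinAt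
  have hinj : Set.InjOn (fun ω => (ξ - ω) / (1 - ω)) (Set.Iio 0) := by
    intro a ha b hb h
    have ha0 : (1:ℝ) - a ≠ 0 := by have : a < (0:ℝ) := ha; linarith
    have hb0 : (1:ℝ) - b ≠ 0 := by have : b < (0:ℝ) := hb; linarith
    simp only at h
    rw [div_eq_div_iff ha0 hb0] at h
    have h2 : (1-ξ)*(a-b) = 0 := by linear_combination -h
    rcases mul_eq_zero.mp h2 with h' | h'
    · exact absurd h' hξ
    · linarith
  rcases lt_or_gt_of_ne hξ with hlt | hlt
  · -- case 1 < ξ, i.e. 1-ξ < 0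
    have himg : (fun ω => (ξ - ω) / (1 - ω)) '' Set.Iio 0 = Set.Ioo 1 ξ := by
      ext z
      simp only [Set.mem_image, Set.mem_Iio, Set.mem_Ioo]
      constructor
      · rintro ⟨ω, hω, rfl⟩
        have h0 : (0:ℝ) < 1 - ω := by linarith
        constructor
        · rw [lt_div_iff₀ h0]; nlinarith
        · rw [div_lt_iff₀ h0]; nlinarith
      · rintro ⟨hz1, hz2⟩
        have h0 : (1:ℝ) - z < 0 := by linarith
        have h0' : (1:ℝ) - z ≠ 0 := ne_of_lt h0
        refine ⟨(ξ - z) / (1 - z), div_neg_of_pos_of_neg (by linarith) h0, ?_⟩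
        have e1 : 1 - (ξ - z) / (1 - z) = (1 - ξ) / (1 - z) := by field_simp; try ring
        have e2 : ξ - (ξ - z) / (1 - z) = z * ((1 - ξ) / (1 - z)) := by
          field_simp; try ring
        simp only [e1, e2]
        exact mul_div_cancel_right₀ z (div_ne_zero hξ h0')
    have hpt : Set.EqOn
        (fun ω => F ((ξ - ω) / (1 - ω)) * (((1 - ω)⁻¹ : ℝ) : ℂ))
        (fun ω => -(|(-(1-ξ)) / (1-ω)^2| • g ((ξ - ω) / (1 - ω)))) (Set.Iio 0) := by
      intro ω hω
      have hω0 : ω < (0:ℝ) := hω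
      have h0 : (0:ℝ) < 1 - ω := by linarith
      have habs : |(-(1-ξ)) / (1-ω)^2| = (-(1-ξ)) / (1-ω)^2 := by
        apply abs_of_pos; apply div_pos (by linarith) (by positivity)
      have hz : (1 : ℝ) - (ξ - ω) / (1 - ω) = (1 - ξ) / (1 - ω) := by field_simp; try ring
      simp only [hg, habs, hz, Complex.real_smul]
      have hc1 : (1 : ℂ) - (ω : ℂ) ≠ 0 := by
        have : ((1 - ω : ℝ) : ℂ) ≠ 0 := by exact_mod_cast h0.ne'
        push_cast at this; exact this
      have hc2 : (1 : ℂ) - (ξ : ℂ) ≠ 0 := by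
        have : ((1 - ξ : ℝ) : ℂ) ≠ 0 := by exact_mod_cast hξ
        push_cast at this; exact this
      set c := F ((ξ - ω) / (1 - ω)) with hcdef
      push_cast
      field_simp
    calc ∫ ω in Set.Iio (0:ℝ), F ((ξ - ω) / (1 - ω)) * (((1 - ω)⁻¹ : ℝ) : ℂ)
        = ∫ ω in Set.Iio (0:ℝ), -(|(-(1-ξ)) / (1-ω)^2| • g ((ξ - ω) / (1 - ω))) :=
          setIntegral_congr_fun hs hpt
      _ = -∫ ω in Set.Iio (0:ℝ), |(-(1-ξ)) / (1-ω)^2| • g ((ξ - ω) / (1 - ω)) :=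
          integral_neg _
      _ = -∫ z in (fun ω => (ξ - ω) / (1 - ω)) '' Set.Iio 0, g z := by
          rw [integral_image_eq_integral_abs_deriv_smul hs hderiv hinj g]
      _ = -∫ z in Set.Ioo (1:ℝ) ξ, g z := by rw [himg]
      _ = -∫ z in Set.Ioc (1:ℝ) ξ, g z := by rw [integral_Ioc_eq_integral_Ioo]
      _ = -∫ z in (1:ℝ)..ξ, g z := by rw [intervalIntegral.integral_of_le (by linarith)]
      _ = ∫ z in ξ..(1:ℝ), g z := (intervalIntegral.integral_symm _ _).symm
  · -- case ξ < 1
    have himg : (fun ω => (ξ - ω) / (1 - ω)) '' Set.Iio 0 = Set.Ioo ξ 1 := by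
      ext z
      simp only [Set.mem_image, Set.mem_Iio, Set.mem_Ioo]
      constructor
      · rintro ⟨ω, hω, rfl⟩
        have h0 : (0:ℝ) < 1 - ω := by linarith
        constructor
        · rw [lt_div_iff₀ h0]; nlinarith
        · rw [div_lt_iff₀ h0]; nlinarith
      · rintro ⟨hz1, hz2⟩
        have h0 : (0:ℝ) < 1 - z := by linarith
        have h0' : (1:ℝ) - z ≠ 0 := h0.ne'
        refine ⟨(ξ - z) / (1 - z), div_neg_of_neg_of_pos (by linarith) h0, ?_⟩
        have e1 : 1 - (ξ - z) / (1 - z) = (1 - ξ) / (1 - z) := by field_simp; try ring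
        have e2 : ξ - (ξ - z) / (1 - z) = z * ((1 - ξ) / (1 - z)) := by
          field_simp; try ring
        simp only [e1, e2]
        exact mul_div_cancel_right₀ z (div_ne_zero hξ h0')
    have hpt : Set.EqOn
        (fun ω => F ((ξ - ω) / (1 - ω)) * (((1 - ω)⁻¹ : ℝ) : ℂ))
        (fun ω => |(-(1-ξ)) / (1-ω)^2| • g ((ξ - ω) / (1 - ω))) (Set.Iio 0) := by
      intro ω hω
      have hω0 : ω < (0:ℝ) := hω
      have h0 : (0:ℝ) < 1 - ω := by linarith
      have habs : |(-(1-ξ)) / (1-ω)^2| = (1-ξ) / (1-ω)^2 := by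
        rw [abs_div, abs_neg, abs_of_pos (by linarith), abs_of_pos (by positivity)]
      have hz : (1 : ℝ) - (ξ - ω) / (1 - ω) = (1 - ξ) / (1 - ω) := by field_simp; try ring
      simp only [hg, habs, hz, Complex.real_smul]
      have hc1 : (1 : ℂ) - (ω : ℂ) ≠ 0 := by
        have : ((1 - ω : ℝ) : ℂ) ≠ 0 := by exact_mod_cast h0.ne'
        push_cast at this; exact this
      have hc2 : (1 : ℂ) - (ξ : ℂ) ≠ 0 := by
        have : ((1 - ξ : ℝ) : ℂ) ≠ 0 := by exact_mod_cast hξ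
        push_cast at this; exact this
      set c := F ((ξ - ω) / (1 - ω)) with hcdef
      push_cast
      field_simp
    calc ∫ ω in Set.Iio (0:ℝ), F ((ξ - ω) / (1 - ω)) * (((1 - ω)⁻¹ : ℝ) : ℂ)
        = ∫ ω in Set.Iio (0:ℝ), |(-(1-ξ)) / (1-ω)^2| • g ((ξ - ω) / (1 - ω)) :=
          setIntegral_congr_fun hs hpt
      _ = ∫ z in (fun ω => (ξ - ω) / (1 - ω)) '' Set.Iio 0, g z :=
          (integral_image_eq_integral_abs_deriv_smul hs hderiv hinj g).symm
      _ = ∫ z in Set.Ioo ξ (1:ℝ), g z := by rw [himg]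
      _ = ∫ z in Set.Ioc ξ (1:ℝ), g z := by rw [integral_Ioc_eq_integral_Ioo]
      _ = ∫ z in ξ..(1:ℝ), g z := (intervalIntegral.integral_of_le (by linarith)).symm

/-- Change-of-variables computation of the symbol of the affine
Weyl–Heisenberg system with `η(ω) = ω`, `β(ω) = (1+|ω|)⁻¹` and `s = 1`:  for a.e. `ξ`,
`∫_ℝ F((ξ-ω)/(1+|ω|)) (1+|ω|)⁻¹ dω = ∫_{-1}^ξ F(z)/(1+z) dz + ∫_ξ^1 F(z)/(1-z) dz`,
the one-dimensional integrals on the right being oriented (interval) integrals.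
In particular, with `F = conj ψ̂ · φ̂`, the left-hand side is the symbol `m(ξ)` of the
system `M_ω T_x D_{(1+|ω|)⁻¹} ψ`, `M_ω T_x D_{(1+|ω|)⁻¹} φ` with measure `dx dω`. -/
theorem affineWeylHeisenberg_symbol_formula
    (F : ℝ → ℂ) (hFmeas : Measurable F)
    (hF1 : ∫⁻ z in Set.Ioo (-1 : ℝ) 1,
        (‖F z‖₊ : ℝ≥0∞) * ENNReal.ofReal ((1 + z)⁻¹ + (1 - z)⁻¹) < ⊤)
    (hloc1 : LocallyIntegrableOn (fun z => F z / ((1 + z : ℝ) : ℂ)) {(-1 : ℝ)}ᶜ volume)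
    (hloc2 : LocallyIntegrableOn (fun z => F z / ((1 - z : ℝ) : ℂ)) {(1 : ℝ)}ᶜ volume)
    (hint : ∀ᵐ ξ ∂(volume : Measure ℝ),
      ∫⁻ ω, (‖F ((ξ - ω) / (1 + |ω|))‖₊ : ℝ≥0∞) * ENNReal.ofReal (1 + |ω|)⁻¹ < ⊤) :
    ∀ᵐ ξ ∂(volume : Measure ℝ),
      ∫ ω : ℝ, F ((ξ - ω) / (1 + |ω|)) * (((1 + |ω|)⁻¹ : ℝ) : ℂ)
        = (∫ z in (-1 : ℝ)..ξ, F z / ((1 + z : ℝ) : ℂ))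
          + ∫ z in ξ..(1 : ℝ), F z / ((1 - z : ℝ) : ℂ) := by
  have h1 : ∀ᵐ ξ : ℝ ∂volume, ξ ≠ (-1 : ℝ) := by
    refine ae_iff.mpr ?_
    simp only [ne_eq, not_not]
    simpa using measure_singleton (-1 : ℝ)
  have h2 : ∀ᵐ ξ : ℝ ∂volume, ξ ≠ (1 : ℝ) := by
    refine ae_iff.mpr ?_
    simp only [ne_eq, not_not]
    simpa using measure_singleton (1 : ℝ)
  filter_upwards [hint, h1, h2] with ξ hξint hξ1 hξ2
  -- integrability of the full integrand
  set G : ℝ → ℂ := fun ω => F ((ξ - ω) / (1 + |ω|)) * (((1 + |ω|)⁻¹ : ℝ) : ℂ) with hG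
  have hcont : Continuous fun ω : ℝ => (1 + |ω|) := by continuity
  have hne : ∀ ω : ℝ, (1 + |ω|) ≠ 0 := fun ω => by positivity
  have hmeas : Measurable G := by
    apply Measurable.mul
    · exact hFmeas.comp ((Continuous.div (by continuity) hcont hne).measurable)
    · exact Complex.measurable_ofReal.comp ((hcont.measurable).inv)
  have hGint : Integrable G := by
    refine ⟨hmeas.aestronglyMeasurable, ?_⟩
    have hkey : ∀ ω : ℝ, (‖G ω‖₊ : ℝ≥0∞)
        = (‖F ((ξ - ω) / (1 + |ω|))‖₊ : ℝ≥0∞) * ENNReal.ofReal (1 + |ω|)⁻¹ := by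
      intro ω
      rw [hG]
      simp only [nnnorm_mul, ENNReal.coe_mul]
      congr 1
      rw [Complex.nnnorm_real]; exact Real.enorm_eq_ofReal (by positivity : (0:ℝ) ≤ (1 + |ω|)⁻¹)
    rw [HasFiniteIntegral]
    calc ∫⁻ ω, (‖G ω‖₊ : ℝ≥0∞)
        = ∫⁻ ω, (‖F ((ξ - ω) / (1 + |ω|))‖₊ : ℝ≥0∞) * ENNReal.ofReal (1 + |ω|)⁻¹ :=
          lintegral_congr hkey
      _ < ⊤ := hξint
  have hsplit : (∫ ω, G ω)
      = (∫ ω in Set.Iio (0:ℝ), G ω) + ∫ ω in Set.Ioi (0:ℝ), G ω := by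
    rw [← integral_Iic_eq_integral_Iio,
      intervalIntegral.integral_Iic_add_Ioi hGint.integrableOn hGint.integrableOn]
  have hIio : (∫ ω in Set.Iio (0:ℝ), G ω)
      = ∫ ω in Set.Iio (0:ℝ), F ((ξ - ω) / (1 - ω)) * (((1 - ω)⁻¹ : ℝ) : ℂ) := by
    refine setIntegral_congr_fun measurableSet_Iio (fun ω hω => ?_)
    have : |ω| = -ω := abs_of_neg hω
    simp only [hG, this, ← sub_eq_add_neg]
  have hIoi : (∫ ω in Set.Ioi (0:ℝ), G ω)
      = ∫ ω in Set.Ioi (0:ℝ), F ((ξ - ω) / (1 + ω)) * (((1 + ω)⁻¹ : ℝ) : ℂ) := by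
    refine setIntegral_congr_fun measurableSet_Ioi (fun ω hω => ?_)
    have : |ω| = ω := abs_of_pos hω
    simp only [hG, this]
  have hA : (1:ℝ) + ξ ≠ 0 := fun h => hξ1 (by linarith)
  have hB : (1:ℝ) - ξ ≠ 0 := fun h => hξ2 (by linarith)
  calc ∫ ω, G ω
      = (∫ ω in Set.Iio (0:ℝ), G ω) + ∫ ω in Set.Ioi (0:ℝ), G ω := hsplit
    _ = (∫ z in ξ..(1:ℝ), F z / ((1 - z : ℝ) : ℂ))
        + ∫ z in (-1:ℝ)..ξ, F z / ((1 + z : ℝ) : ℂ) := by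
        rw [hIio, hIoi, keyB F ξ hB, keyA F ξ hA]
    _ = (∫ z in (-1:ℝ)..ξ, F z / ((1 + z : ℝ) : ℂ))
        + ∫ z in ξ..(1:ℝ), F z / ((1 - z : ℝ) : ℂ) := add_comm _ _
end
end

section
/- Let ψ̂(z) := (1−z)·χ_{[−1,1]}(z) and φ̂(z) := (1+z)·χ_{[−1,1]}(z), and define m(ξ) := ∫_{−1}^{ξ} ψ̂(z)φ̂(z)/(1+z) dz + ∫_{ξ}^{1} ψ̂(z)φ̂(z)/(1−z) dz (oriented integrals). Then m(ξ) = 3 − ξ² for |ξ| ≤ 1 and m(ξ) = 2 for |ξ| > 1; in particular 2 ≤ m(ξ) ≤ 3 for all ξ ∈ ℝ. -/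
open MeasureTheory Real intervalIntegral
open scoped ComplexConjugate

noncomputable section

private def Fc : ℝ → ℂ := fun z => (Set.Ioc (-1 : ℝ) 1).indicator (fun z => ((1 - z : ℝ) : ℂ)) z
private def Gc : ℝ → ℂ := fun z => (Set.Ico (-1 : ℝ) 1).indicator (fun z => ((1 + z : ℝ) : ℂ)) z

private lemma Fc_integrable : Integrable Fc := by
  apply ((Complex.continuous_ofReal.comp (continuous_const.sub continuous_id)).integrableOn_Icc
    (a := (-1:ℝ)) (b := 1)).mono_set Set.Ioc_subset_Icc_self |>.integrable_indicator
    measurableSet_Ioc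

private lemma Gc_integrable : Integrable Gc := by
  apply ((Complex.continuous_ofReal.comp (continuous_const.add continuous_id)).integrableOn_Icc
    (a := (-1:ℝ)) (b := 1)).mono_set Set.Ico_subset_Icc_self |>.integrable_indicator
    measurableSet_Ico

private lemma F_int (ξ : ℝ) (h1 : -1 ≤ ξ) (h2 : ξ ≤ 1) :
    ∫ z in (-1:ℝ)..ξ, Fc z = ((ξ - ξ^2/2 + 3/2 : ℝ) : ℂ) := by
  have : ∫ z in (-1:ℝ)..ξ, Fc z = ∫ z in (-1:ℝ)..ξ, ((1 - z : ℝ) : ℂ) := by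
    apply intervalIntegral.integral_congr_ae
    refine Filter.Eventually.of_forall fun x hx => ?_
    rw [Set.uIoc_of_le h1] at hx
    exact Set.indicator_of_mem (show x ∈ Set.Ioc (-1:ℝ) 1 from ⟨hx.1, hx.2.trans h2⟩) _
  rw [this, intervalIntegral.integral_ofReal]
  have : ∫ z in (-1:ℝ)..ξ, (1 - z) = ξ - ξ^2/2 + 3/2 := by
    rw [intervalIntegral.integral_sub intervalIntegrable_const intervalIntegral.intervalIntegrable_id,
      intervalIntegral.integral_const, integral_id]
    simp only [smul_eq_mul]
    ring
  rw [this]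

private lemma G_int (ξ : ℝ) (h1 : -1 ≤ ξ) (h2 : ξ ≤ 1) :
    ∫ z in ξ..(1:ℝ), Gc z = ((3/2 - ξ - ξ^2/2 : ℝ) : ℂ) := by
  have : ∫ z in ξ..(1:ℝ), Gc z = ∫ z in ξ..(1:ℝ), ((1 + z : ℝ) : ℂ) := by
    apply intervalIntegral.integral_congr_ae
    have hae : ∀ᵐ x : ℝ, x ≠ 1 := by
      rw [Filter.eventually_iff, mem_ae_iff]
      simp [Real.volume_singleton]
    filter_upwards [hae] with x hx1 hx
    rw [Set.uIoc_of_le h2] at hx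
    exact Set.indicator_of_mem (show x ∈ Set.Ico (-1:ℝ) 1 from ⟨h1.trans hx.1.le, lt_of_le_of_ne hx.2 hx1⟩) _
  rw [this, intervalIntegral.integral_ofReal]
  have : ∫ z in ξ..(1:ℝ), (1 + z) = 3/2 - ξ - ξ^2/2 := by
    rw [intervalIntegral.integral_add intervalIntegrable_const intervalIntegral.intervalIntegrable_id,
      intervalIntegral.integral_const, integral_id]
    simp only [smul_eq_mul]
    ring
  rw [this]

private lemma F_zero_left (ξ : ℝ) (h : ξ ≤ -1) : ∫ z in (-1:ℝ)..ξ, Fc z = 0 := by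
  have : Set.EqOn Fc 0 (Set.uIcc (-1:ℝ) ξ) := by
    intro x hx
    rw [Set.uIcc_of_ge h] at hx
    exact Set.indicator_of_notMem (fun hmem => absurd hmem.1 (not_lt.2 hx.2)) _
  rw [intervalIntegral.integral_congr this]
  simp

private lemma G_zero_right (ξ : ℝ) (h : 1 ≤ ξ) : ∫ z in ξ..(1:ℝ), Gc z = 0 := by
  have : Set.EqOn Gc 0 (Set.uIcc ξ (1:ℝ)) := by
    intro x hx
    rw [Set.uIcc_of_ge h] at hx
    exact Set.indicator_of_notMem (fun hmem => absurd hmem.2 (not_lt.2 hx.1)) _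
  rw [intervalIntegral.integral_congr this]
  simp

private lemma F_zero_right (ξ : ℝ) (h : 1 ≤ ξ) : ∫ z in (1:ℝ)..ξ, Fc z = 0 := by
  have : Set.EqOn Fc 0 (Set.uIcc (1:ℝ) ξ) := by
    intro x hx
    rw [Set.uIcc_of_le h] at hx
    by_cases hmem : x ∈ Set.Ioc (-1:ℝ) 1
    · have : x = 1 := le_antisymm hmem.2 hx.1
      subst this
      simp [Fc, Set.indicator_of_mem hmem]
    · exact Set.indicator_of_notMem hmem _
  rw [intervalIntegral.integral_congr this]
  simp

private lemma G_zero_left (ξ : ℝ) (h : ξ ≤ -1) : ∫ z in ξ..(-1:ℝ), Gc z = 0 := by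
  have : Set.EqOn Gc 0 (Set.uIcc ξ (-1:ℝ)) := by
    intro x hx
    rw [Set.uIcc_of_le h] at hx
    by_cases hmem : x ∈ Set.Ico (-1:ℝ) 1
    · have : x = -1 := le_antisymm hx.2 hmem.1
      subst this
      simp [Gc, Set.indicator_of_mem hmem]
    · exact Set.indicator_of_notMem hmem _
  rw [intervalIntegral.integral_congr this]
  simp

/-- For the windows with `ψ̂(z) = (1-z)χ_{[-1,1]}(z)` and
`φ̂(z) = (1+z)χ_{[-1,1]}(z)`, the symbol
`m(ξ) = ∫_{-1}^ξ ψ̂(z)φ̂(z)/(1+z) dz + ∫_ξ^1 ψ̂(z)φ̂(z)/(1-z) dz` (oriented integrals)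
equals `3 - ξ²` for `|ξ| ≤ 1` and `2` for `|ξ| > 1`; in particular `2 ≤ m(ξ) ≤ 3`
(and `m` is real valued). -/
theorem affineWeylHeisenberg_symbol_example
    (ψhat φhat : ℝ → ℂ)
    (hψ : ψhat = fun z => ((1 - z : ℝ) : ℂ) * (Set.Icc (-1 : ℝ) 1).indicator (fun _ => (1 : ℂ)) z)
    (hφ : φhat = fun z => ((1 + z : ℝ) : ℂ) * (Set.Icc (-1 : ℝ) 1).indicator (fun _ => (1 : ℂ)) z)
    (m : ℝ → ℂ)
    (hm : ∀ ξ, m ξ = (∫ z in (-1 : ℝ)..ξ, ψhat z * φhat z / ((1 + z : ℝ) : ℂ))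
      + ∫ z in ξ..(1 : ℝ), ψhat z * φhat z / ((1 - z : ℝ) : ℂ)) :
    (∀ ξ : ℝ, |ξ| ≤ 1 → m ξ = ((3 - ξ ^ 2 : ℝ) : ℂ)) ∧
    (∀ ξ : ℝ, 1 < |ξ| → m ξ = 2) ∧
    (∀ ξ : ℝ, (m ξ).im = 0 ∧ 2 ≤ (m ξ).re ∧ (m ξ).re ≤ 3) := by
  have hF : (fun z => ψhat z * φhat z / ((1 + z : ℝ) : ℂ)) = Fc := by
    funext z
    simp only [hψ, hφ, Fc]
    by_cases h : z ∈ Set.Icc (-1:ℝ) 1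
    · rcases eq_or_ne z (-1) with rfl | hz
      · norm_num
      · have hne : ((1 + z : ℝ) : ℂ) ≠ 0 := by
          simp only [ne_eq, Complex.ofReal_eq_zero]
          intro hc; apply hz; linarith
        have hmem : z ∈ Set.Ioc (-1:ℝ) 1 := ⟨lt_of_le_of_ne h.1 (Ne.symm hz), h.2⟩
        rw [Set.indicator_of_mem h, Set.indicator_of_mem hmem, div_eq_iff hne]
        push_cast
        ring
    · have h2 : z ∉ Set.Ioc (-1:ℝ) 1 := fun hz => h ⟨hz.1.le, hz.2⟩
      rw [Set.indicator_of_notMem h, Set.indicator_of_notMem h2]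
      simp
  have hG : (fun z => ψhat z * φhat z / ((1 - z : ℝ) : ℂ)) = Gc := by
    funext z
    simp only [hψ, hφ, Gc]
    by_cases h : z ∈ Set.Icc (-1:ℝ) 1
    · rcases eq_or_ne z 1 with rfl | hz
      · norm_num
      · have hne : ((1 - z : ℝ) : ℂ) ≠ 0 := by
          simp only [ne_eq, Complex.ofReal_eq_zero]
          intro hc; apply hz; linarith
        have hmem : z ∈ Set.Ico (-1:ℝ) 1 := ⟨h.1, lt_of_le_of_ne h.2 hz⟩
        rw [Set.indicator_of_mem h, Set.indicator_of_mem hmem, div_eq_iff hne]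
        push_cast
        ring
    · have h2 : z ∉ Set.Ico (-1:ℝ) 1 := fun hz => h ⟨hz.1, hz.2.le⟩
      rw [Set.indicator_of_notMem h, Set.indicator_of_notMem h2]
      simp
  have hm' : ∀ ξ, m ξ = (∫ z in (-1:ℝ)..ξ, Fc z) + ∫ z in ξ..(1:ℝ), Gc z := by
    intro ξ
    rw [hm ξ, ← hF, ← hG]
  -- main formula
  have hmain : ∀ ξ : ℝ, |ξ| ≤ 1 → m ξ = ((3 - ξ ^ 2 : ℝ) : ℂ) := by
    intro ξ hξ
    rw [abs_le] at hξ
    rw [hm' ξ, F_int ξ hξ.1 hξ.2, G_int ξ hξ.1 hξ.2]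
    push_cast
    ring
  have houter : ∀ ξ : ℝ, 1 < |ξ| → m ξ = 2 := by
    intro ξ hξ
    rcases lt_or_ge ξ 0 with hneg | hpos
    · have hξ' : ξ < -1 := by
        rw [abs_of_neg hneg] at hξ; linarith
      rw [hm' ξ, F_zero_left ξ hξ'.le]
      have hsplit : (∫ z in ξ..(-1:ℝ), Gc z) + ∫ z in (-1:ℝ)..(1:ℝ), Gc z
          = ∫ z in ξ..(1:ℝ), Gc z :=
        intervalIntegral.integral_add_adjacent_intervals
          Gc_integrable.intervalIntegrable Gc_integrable.intervalIntegrable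
      rw [← hsplit, G_zero_left ξ hξ'.le, G_int (-1) le_rfl (by norm_num)]
      norm_num
    · have hξ' : 1 < ξ := by
        rw [abs_of_nonneg hpos] at hξ; exact hξ
      rw [hm' ξ, G_zero_right ξ hξ'.le]
      have hsplit : (∫ z in (-1:ℝ)..(1:ℝ), Fc z) + ∫ z in (1:ℝ)..ξ, Fc z
          = ∫ z in (-1:ℝ)..ξ, Fc z :=
        intervalIntegral.integral_add_adjacent_intervals
          Fc_integrable.intervalIntegrable Fc_integrable.intervalIntegrable
      rw [← hsplit, F_zero_right ξ hξ'.le, F_int 1 (by norm_num) le_rfl]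
      norm_num
  refine ⟨hmain, houter, fun ξ => ?_⟩
  rcases le_or_gt (|ξ|) 1 with h | h
  · rw [hmain ξ h]
    have h2 : ξ ^ 2 ≤ 1 := by
      have := sq_abs ξ
      nlinarith [abs_nonneg ξ]
    refine ⟨Complex.ofReal_im _, ?_, ?_⟩
    · rw [Complex.ofReal_re]; nlinarith [sq_nonneg ξ]
    · rw [Complex.ofReal_re]; nlinarith [sq_nonneg ξ]
  · rw [houter ξ h]
    norm_num
end
end

section
/- There exist no ψ, φ ∈ L²(ℝ) satisfying both ∫_{−1}^{1} |ψ̂(z)φ̂(z)|·(1/(1+z) + 1/(1−z)) dz < ∞ and m(ξ) = 1 for a.e. ξ ∈ ℝ, where m(ξ) := ∫_{−1}^{ξ} conj(ψ̂(z))φ̂(z)/(1+z) dz + ∫_{ξ}^{1} conj(ψ̂(z))φ̂(z)/(1−z) dz (oriented integrals). Consequently, for the affine Weyl–Heisenberg systems with η(ω) = ω, β(ω) = (1+|ω|)^{−1} and s = 1, there is no reproducing pair (Ψ,Φ) satisfying the absolute convergence condition whose resolution operator is the identity. -/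
open MeasureTheory Real
open scoped ComplexConjugate ENNReal

noncomputable section

lemma ae_zero_of_intervalIntegral_zero {k : ℝ → ℂ}
    (hk : Integrable k (volume : Measure ℝ))
    (h0 : ∀ a b : ℝ, a ∈ Set.Ioo (-1:ℝ) 1 → b ∈ Set.Ioo (-1:ℝ) 1 → (∫ z in a..b, k z) = 0) :
    ∀ᵐ x ∂(volume : Measure ℝ), x ∈ Set.Ioo (-1:ℝ) 1 → k x = 0 := by
  filter_upwards [IsUnifLocDoublingMeasure.ae_tendsto_average
    (μ := (volume : Measure ℝ)) hk.locallyIntegrable 1] with x hx hmem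
  obtain ⟨hx1, hx2⟩ := hmem
  have hmin : 0 < min (x + 1) (1 - x) := lt_min (by linarith) (by linarith)
  set ε : ℝ := min (x + 1) (1 - x) / 2 with hεdef
  have hεpos : 0 < ε := by positivity
  have hεlt : ε < min (x + 1) (1 - x) := by rw [hεdef]; linarith
  set δ : ℕ → ℝ := fun n => ε / (n + 1) with hδdef
  have hδpos : ∀ n, 0 < δ n := fun n => by positivity
  have hδle : ∀ n, δ n ≤ ε := by
    intro n
    rw [hδdef]
    calc ε / (n + 1) ≤ ε / 1 := by
          apply div_le_div_of_nonneg_left hεpos.le one_pos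
          exact_mod_cast Nat.le_add_left 1 n
      _ = ε := div_one ε
  have hδlim : Filter.Tendsto δ Filter.atTop (nhdsWithin 0 (Set.Ioi 0)) := by
    rw [tendsto_nhdsWithin_iff]
    constructor
    · have : Filter.Tendsto (fun n : ℕ => (1 : ℝ) / (n + 1)) Filter.atTop (nhds 0) :=
        tendsto_one_div_add_atTop_nhds_zero_nat
      have := this.const_mul ε
      simpa [hδdef, div_eq_mul_inv, mul_comm, mul_assoc] using this
    · exact Filter.Eventually.of_forall fun n => hδpos n
  have hball : ∀ᶠ j in Filter.atTop, x ∈ Metric.closedBall x (1 * δ j) := by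
    refine Filter.Eventually.of_forall fun j => ?_
    simpa using (by positivity : (0:ℝ) ≤ 1 * δ j)
  have htend := hx (fun _ => x) δ hδlim hball
  have hzero : ∀ j, (⨍ y in Metric.closedBall x (δ j), k y) = 0 := by
    intro j
    have hsub1 : -1 < x - δ j := by
      have := hδle j
      have := min_le_left (x+1) (1-x)
      linarith
    have hsub2 : x + δ j < 1 := by
      have := hδle j
      have := min_le_right (x+1) (1-x)
      linarith
    have hle : x - δ j ≤ x + δ j := by have := (hδpos j).le; linarith
    have : (∫ y in Metric.closedBall x (δ j), k y) = ∫ z in (x - δ j)..(x + δ j), k z := by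
      rw [Real.closedBall_eq_Icc, intervalIntegral.integral_of_le hle,
        integral_Icc_eq_integral_Ioc]
    rw [setAverage_eq, this,
      h0 _ _ ⟨hsub1, by have := hδpos j; linarith⟩ ⟨by have := hδpos j; linarith, hsub2⟩,
      smul_zero]
  have : Filter.Tendsto (fun j => (⨍ y in Metric.closedBall x (δ j), k y)) Filter.atTop (nhds 0) := by
    simp only [hzero]; exact tendsto_const_nhds
  exact tendsto_nhds_unique htend this

/-- For the affine Weyl–Heisenberg systems with `η(ω) = ω`,
`β(ω) = (1+|ω|)⁻¹` and `s = 1`, there is no reproducing pair satisfying the absolute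
convergence condition whose resolution operator is the identity: there are no
`ψ̂, φ̂ ∈ L²(ℝ)` with
`∫_{-1}^1 |ψ̂(z)φ̂(z)| (1/(1+z) + 1/(1-z)) dz < ∞` and
`m(ξ) = ∫_{-1}^ξ conj(ψ̂(z))φ̂(z)/(1+z) dz + ∫_ξ^1 conj(ψ̂(z))φ̂(z)/(1-z) dz = 1`
for a.e. `ξ ∈ ℝ` (oriented integrals). -/
theorem no_identity_resolution_affineWeylHeisenberg :
    ¬ ∃ ψhat φhat : ℝ → ℂ,
      MemLp ψhat 2 (volume : Measure ℝ) ∧ MemLp φhat 2 (volume : Measure ℝ) ∧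
      (∫⁻ z in Set.Ioo (-1 : ℝ) 1,
          (‖ψhat z * φhat z‖₊ : ℝ≥0∞) * ENNReal.ofReal ((1 + z)⁻¹ + (1 - z)⁻¹) < ⊤) ∧
      (∀ᵐ ξ ∂(volume : Measure ℝ),
        (∫ z in (-1 : ℝ)..ξ, conj (ψhat z) * φhat z / ((1 + z : ℝ) : ℂ))
          + (∫ z in ξ..(1 : ℝ), conj (ψhat z) * φhat z / ((1 - z : ℝ) : ℂ)) = 1) := by
  rintro ⟨ψ, φ, hψ, hφ, hconv, hm⟩
  set g : ℝ → ℂ := fun z => conj (ψ z) * φ z / ((1 + z : ℝ) : ℂ) with hgdef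
  set h : ℝ → ℂ := fun z => conj (ψ z) * φ z / ((1 - z : ℝ) : ℂ) with hhdef
  -- measurability
  have hfm : AEStronglyMeasurable (fun z => conj (ψ z) * φ z) (volume : Measure ℝ) :=
    (Complex.continuous_conj.comp_aestronglyMeasurable hψ.aestronglyMeasurable).mul
      hφ.aestronglyMeasurable
  have hgm : AEStronglyMeasurable g (volume : Measure ℝ) :=
    (hfm.aemeasurable.div ((Complex.continuous_ofReal.comp (by continuity)).aestronglyMeasurable.aemeasurable)).aestronglyMeasurable
  have hhm : AEStronglyMeasurable h (volume : Measure ℝ) :=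
    (hfm.aemeasurable.div ((Complex.continuous_ofReal.comp (by continuity)).aestronglyMeasurable.aemeasurable)).aestronglyMeasurable
  -- integrability of g and h on Ioo (-1) 1
  have hnormf : ∀ z : ℝ, ‖conj (ψ z) * φ z‖ = ‖ψ z * φ z‖ := by
    intro z; simp [norm_mul]
  have hg_int : IntegrableOn g (Set.Ioo (-1:ℝ) 1) volume := by
    refine ⟨hgm.restrict, ?_⟩
    refine lt_of_le_of_lt (lintegral_mono_ae ?_) hconv
    filter_upwards [ae_restrict_mem measurableSet_Ioo] with z hz
    have h1 : (0:ℝ) < 1 + z := by have := hz.1; linarith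
    have h2 : (0:ℝ) < 1 - z := by have := hz.2; linarith
    have hng : ‖g z‖ = ‖ψ z * φ z‖ * (1 + z)⁻¹ := by
      rw [hgdef]
      simp only []
      rw [norm_div, hnormf, Complex.norm_real, Real.norm_eq_abs, abs_of_pos h1,
        div_eq_mul_inv]
    calc (‖g z‖₊ : ℝ≥0∞) = ENNReal.ofReal ‖g z‖ := (ENNReal.ofReal_eq_coe_nnreal (norm_nonneg _)).symm
      _ ≤ ENNReal.ofReal (‖ψ z * φ z‖ * ((1 + z)⁻¹ + (1 - z)⁻¹)) := by
          rw [hng]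
          apply ENNReal.ofReal_le_ofReal
          apply mul_le_mul_of_nonneg_left _ (norm_nonneg _)
          have : (0:ℝ) ≤ (1 - z)⁻¹ := by positivity
          linarith
      _ = (‖ψ z * φ z‖₊ : ℝ≥0∞) * ENNReal.ofReal ((1 + z)⁻¹ + (1 - z)⁻¹) := by
          rw [ENNReal.ofReal_mul (norm_nonneg _)]; exact congrArg (· * _) (ENNReal.ofReal_eq_coe_nnreal (norm_nonneg _))
  have hh_int : IntegrableOn h (Set.Ioo (-1:ℝ) 1) volume := by
    refine ⟨hhm.restrict, ?_⟩
    refine lt_of_le_of_lt (lintegral_mono_ae ?_) hconv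
    filter_upwards [ae_restrict_mem measurableSet_Ioo] with z hz
    have h1 : (0:ℝ) < 1 + z := by have := hz.1; linarith
    have h2 : (0:ℝ) < 1 - z := by have := hz.2; linarith
    have hng : ‖h z‖ = ‖ψ z * φ z‖ * (1 - z)⁻¹ := by
      rw [hhdef]
      simp only []
      rw [norm_div, hnormf, Complex.norm_real, Real.norm_eq_abs, abs_of_pos h2,
        div_eq_mul_inv]
    calc (‖h z‖₊ : ℝ≥0∞) = ENNReal.ofReal ‖h z‖ := (ENNReal.ofReal_eq_coe_nnreal (norm_nonneg _)).symm
      _ ≤ ENNReal.ofReal (‖ψ z * φ z‖ * ((1 + z)⁻¹ + (1 - z)⁻¹)) := by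
          rw [hng]
          apply ENNReal.ofReal_le_ofReal
          apply mul_le_mul_of_nonneg_left _ (norm_nonneg _)
          have : (0:ℝ) ≤ (1 + z)⁻¹ := by positivity
          linarith
      _ = (‖ψ z * φ z‖₊ : ℝ≥0∞) * ENNReal.ofReal ((1 + z)⁻¹ + (1 - z)⁻¹) := by
          rw [ENNReal.ofReal_mul (norm_nonneg _)]; exact congrArg (· * _) (ENNReal.ofReal_eq_coe_nnreal (norm_nonneg _))
  have hg_int' : IntegrableOn g (Set.Ioc (-1:ℝ) 1) volume :=
    hg_int.congr_set_ae Ioo_ae_eq_Ioc.symm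
  have hh_int' : IntegrableOn h (Set.Ioc (-1:ℝ) 1) volume :=
    hh_int.congr_set_ae Ioo_ae_eq_Ioc.symm
  have hgInt : ∀ a b : ℝ, a ∈ Set.Icc (-1:ℝ) 1 → b ∈ Set.Icc (-1:ℝ) 1 →
      IntervalIntegrable g volume a b := by
    intro a b ha hb
    rw [intervalIntegrable_iff]
    exact hg_int'.mono_set (Set.Ioc_subset_Ioc (le_min ha.1 hb.1) (max_le ha.2 hb.2))
  have hhInt : ∀ a b : ℝ, a ∈ Set.Icc (-1:ℝ) 1 → b ∈ Set.Icc (-1:ℝ) 1 →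
      IntervalIntegrable h volume a b := by
    intro a b ha hb
    rw [intervalIntegrable_iff]
    exact hh_int'.mono_set (Set.Ioc_subset_Ioc (le_min ha.1 hb.1) (max_le ha.2 hb.2))
  -- the full-measure set T
  set m : ℝ → ℂ := fun ξ => (∫ z in (-1:ℝ)..ξ, g z) + (∫ z in ξ..(1:ℝ), h z) with hmdef
  set N : Set ℝ := {ξ | ¬ m ξ = 1} with hNdef
  have hN : volume N = 0 := by
    have := hm
    rw [ae_iff] at this
    exact this
  set T : Set ℝ := Set.Ioo (-1:ℝ) 1 ∩ {ξ | m ξ = 1} with hTdef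
  have hT0 : ∃ ξ0, ξ0 ∈ T := by
    have h1 : volume (Set.Ioo (-1:ℝ) 1 \ N) = volume (Set.Ioo (-1:ℝ) 1) :=
      measure_diff_null hN
    have h2 : volume (Set.Ioo (-1:ℝ) 1) ≠ 0 := by
      rw [Real.volume_Ioo]
      simp only [ne_eq, ENNReal.ofReal_eq_zero, not_le]
      norm_num
    obtain ⟨ξ0, hξ0⟩ := nonempty_of_measure_ne_zero (h1 ▸ h2)
    exact ⟨ξ0, hξ0.1, not_not.mp hξ0.2⟩
  have hTdense : ∀ x ∈ Set.Ioo (-1:ℝ) 1, x ∈ closure T := by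
    intro x hx
    rw [_root_.mem_closure_iff]
    intro o ho hxo
    by_contra hne
    rw [Set.not_nonempty_iff_eq_empty] at hne
    have hsub : o ∩ Set.Ioo (-1:ℝ) 1 ⊆ N := by
      rintro y ⟨hyo, hyI⟩
      by_contra hyN
      have : y ∈ o ∩ T := ⟨hyo, hyI, not_not.mp hyN⟩
      rw [hne] at this
      exact this
    have hop : IsOpen (o ∩ Set.Ioo (-1:ℝ) 1) := ho.inter isOpen_Ioo
    have hpos : 0 < volume (o ∩ Set.Ioo (-1:ℝ) 1) :=
      hop.measure_pos volume ⟨x, hxo, hx⟩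
    exact hpos.ne' (measure_mono_null hsub hN)
  -- the primitive H of the indicator of g - h
  set kInd : ℝ → ℂ := (Set.Ioo (-1:ℝ) 1).indicator (fun z => g z - h z) with hkdef
  have hkInd : Integrable kInd (volume : Measure ℝ) := by
    have : IntegrableOn (fun z => g z - h z) (Set.Ioo (-1:ℝ) 1) volume := hg_int.sub hh_int
    exact this.integrable_indicator measurableSet_Ioo
  set H : ℝ → ℂ := fun t => ∫ z in (0:ℝ)..t, kInd z with hHdef
  have hHcont : Continuous H := hkInd.continuous_primitive 0
  have hHsub : ∀ a b : ℝ, H b - H a = ∫ z in a..b, kInd z := fun a b =>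
    intervalIntegral.integral_interval_sub_left hkInd.intervalIntegrable
      hkInd.intervalIntegrable
  have hkcongr : ∀ a b : ℝ, a ∈ Set.Ioo (-1:ℝ) 1 → b ∈ Set.Ioo (-1:ℝ) 1 →
      (∫ z in a..b, kInd z) = ∫ z in a..b, (g z - h z) := by
    intro a b ha hb
    apply intervalIntegral.integral_congr
    intro z hz
    have hzI : z ∈ Set.Ioo (-1:ℝ) 1 := by
      rcases hz with ⟨hz1, hz2⟩
      constructor
      · exact lt_of_lt_of_le (lt_min ha.1 hb.1) hz1
      · exact lt_of_le_of_lt hz2 (max_lt ha.2 hb.2)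
    exact Set.indicator_of_mem hzI _
  -- on T, the integral of g - h between two points vanishes
  have hkey : ∀ ξ1 ∈ T, ∀ ξ2 ∈ T, (∫ z in ξ1..ξ2, (g z - h z)) = 0 := by
    rintro ξ1 ⟨hξ1I, hξ1m⟩ ξ2 ⟨hξ2I, hξ2m⟩
    have hξ1c : ξ1 ∈ Set.Icc (-1:ℝ) 1 := ⟨hξ1I.1.le, hξ1I.2.le⟩
    have hξ2c : ξ2 ∈ Set.Icc (-1:ℝ) 1 := ⟨hξ2I.1.le, hξ2I.2.le⟩
    have hm1 : (-1:ℝ) ∈ Set.Icc (-1:ℝ) 1 := ⟨le_refl _, by norm_num⟩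
    have hp1 : (1:ℝ) ∈ Set.Icc (-1:ℝ) 1 := ⟨by norm_num, le_refl _⟩
    rw [intervalIntegral.integral_sub (hgInt _ _ hξ1c hξ2c) (hhInt _ _ hξ1c hξ2c)]
    have e2 : (∫ z in ξ1..ξ2, g z) = (∫ z in (-1:ℝ)..ξ2, g z) - ∫ z in (-1:ℝ)..ξ1, g z :=
      (intervalIntegral.integral_interval_sub_left (hgInt _ _ hm1 hξ2c)
        (hgInt _ _ hm1 hξ1c)).symm
    have e3 : (∫ z in ξ1..ξ2, h z) = (∫ z in ξ1..(1:ℝ), h z) - ∫ z in ξ2..(1:ℝ), h z :=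
      eq_sub_of_add_eq
        (intervalIntegral.integral_add_adjacent_intervals (hhInt _ _ hξ1c hξ2c)
          (hhInt _ _ hξ2c hp1))
    have hv1 : m ξ1 = 1 := hξ1m
    have hv2 : m ξ2 = 1 := hξ2m
    rw [hmdef] at hv1 hv2
    simp only at hv1 hv2
    rw [e2, e3]
    linear_combination hv2 - hv1
  -- H is constant on Ioo (-1) 1
  obtain ⟨ξ0, hξ0⟩ := hT0
  have hTsub : T ⊆ {t | H t = H ξ0} := by
    intro ξ hξ
    have h1 := hHsub ξ0 ξ
    rw [hkcongr _ _ hξ0.1 hξ.1, hkey _ hξ0 _ hξ] at h1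
    exact sub_eq_zero.mp h1
  have hclosed : IsClosed {t | H t = H ξ0} := isClosed_eq hHcont continuous_const
  have hIooconst : ∀ x ∈ Set.Ioo (-1:ℝ) 1, H x = H ξ0 := by
    intro x hx
    exact hclosed.closure_subset_iff.mpr hTsub (hTdense x hx)
  -- all interval integrals of kInd inside Ioo vanish
  have h0 : ∀ a b : ℝ, a ∈ Set.Ioo (-1:ℝ) 1 → b ∈ Set.Ioo (-1:ℝ) 1 →
      (∫ z in a..b, kInd z) = 0 := by
    intro a b ha hb
    rw [← hHsub a b, hIooconst a ha, hIooconst b hb, sub_self]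
  have hae := ae_zero_of_intervalIntegral_zero hkInd h0
  -- deduce g = h = 0 a.e. on Ioo
  have hne0 : ∀ᵐ x : ℝ, x ≠ (0:ℝ) := by
    rw [ae_iff]
    have : {x : ℝ | ¬ x ≠ 0} = {0} := by ext x; simp
    rw [this]
    exact measure_singleton 0
  have hfae : ∀ᵐ x : ℝ, x ∈ Set.Ioo (-1:ℝ) 1 → (g x = 0 ∧ h x = 0) := by
    filter_upwards [hae, hne0] with x hx hx0 hxI
    have hgh : g x = h x := by
      have := hx hxI
      rw [hkdef, Set.indicator_of_mem hxI, sub_eq_zero] at this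
      exact this
    have ha : ((1 + x : ℝ) : ℂ) ≠ 0 :=
      Complex.ofReal_ne_zero.mpr (by have := hxI.1; intro hc; linarith [hc ▸ (by linarith : (0:ℝ) < 1 + x)])
    have hb : ((1 - x : ℝ) : ℂ) ≠ 0 :=
      Complex.ofReal_ne_zero.mpr (by have := hxI.2; intro hc; linarith [hc ▸ (by linarith : (0:ℝ) < 1 - x)])
    have hmul : conj (ψ x) * φ x * ((1 - x : ℝ) : ℂ) = conj (ψ x) * φ x * ((1 + x : ℝ) : ℂ) := by
      rw [hgdef, hhdef] at hgh
      simp only at hgh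
      rw [div_eq_div_iff ha hb] at hgh
      exact hgh
    have hf0 : conj (ψ x) * φ x = 0 := by
      have hdiff : conj (ψ x) * φ x * (((1 - x : ℝ) : ℂ) - ((1 + x : ℝ) : ℂ)) = 0 := by
        linear_combination hmul
      rcases mul_eq_zero.mp hdiff with hc | hc
      · exact hc
      · exfalso
        apply hx0
        have : ((1 - x : ℝ) : ℂ) = ((1 + x : ℝ) : ℂ) := sub_eq_zero.mp hc
        have := Complex.ofReal_inj.mp this
        linarith
    constructor
    · rw [hgdef]; simp only; rw [hf0, zero_div]
    · rw [hhdef]; simp only; rw [hf0, zero_div]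
  -- conclude: m ξ0 = 0, contradiction
  have hv : m ξ0 = 1 := hξ0.2
  have hI1 : (∫ z in (-1:ℝ)..ξ0, g z) = 0 := by
    rw [intervalIntegral.integral_of_le hξ0.1.1.le]
    apply integral_eq_zero_of_ae
    filter_upwards [ae_restrict_of_ae hfae, ae_restrict_mem measurableSet_Ioc] with z hz hmem
    exact (hz ⟨hmem.1, lt_of_le_of_lt hmem.2 hξ0.1.2⟩).1
  have hI2 : (∫ z in ξ0..(1:ℝ), h z) = 0 := by
    rw [intervalIntegral.integral_of_le hξ0.1.2.le]
    apply integral_eq_zero_of_ae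
    have hne1 : ∀ᵐ z ∂(volume.restrict (Set.Ioc ξ0 (1:ℝ))), z ≠ (1:ℝ) := by
      apply ae_restrict_of_ae
      rw [ae_iff]
      have : {z : ℝ | ¬ z ≠ 1} = {1} := by ext z; simp
      rw [this]
      exact measure_singleton 1
    filter_upwards [ae_restrict_of_ae hfae, ae_restrict_mem measurableSet_Ioc, hne1]
      with z hz hmem hz1
    exact (hz ⟨lt_trans hξ0.1.1 hmem.1, lt_of_le_of_ne hmem.2 hz1⟩).2
  rw [hmdef] at hv
  simp only at hv
  rw [hI1, hI2, add_zero] at hv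
  exact one_ne_zero hv.symm
end
end

section
/- Let ψ̂(z) := (1+z)·χ_{[−1,1]}(z) and β(ω) := (1+|ω|)^{−1}. For every measurable F: ℝ → ℂ with |F(ξ)| ≥ 1 for a.e. ξ ∈ [−1,1], the integral ∫_ℝ ∫_ℝ |F(ξ)|²·|ψ̂(β(ω)(ξ−ω))|²·β(ω) dξ dω diverges (equals +∞). Consequently, for f ∈ L²(ℝ) with |f̂| ≥ 1 a.e. on [−1,1], the analysis coefficients of f with respect to the affine Weyl–Heisenberg system Ψ(x,ω) = M_ω T_x D_{β(ω)}ψ are not square integrable, so Ψ is not a Bessel mapping even though it is part of a reproducing pair. -/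
open MeasureTheory Real
open scoped ENNReal

noncomputable section

/-- The integral of `(1+|ω|)⁻¹` over `Iic (-1)` diverges. -/
lemma aux_lintegral_top :
    ∫⁻ ω in Set.Iic (-1 : ℝ), ENNReal.ofReal (1 + |ω|)⁻¹ = ⊤ := by
  set h : ℝ → ℝ := Set.indicator (Set.Iic (-1 : ℝ)) (fun ω => (1 + |ω|)⁻¹) with hh
  have hmeas : Measurable h := by
    apply Measurable.indicator _ measurableSet_Iic
    exact ((measurable_const.add measurable_abs).inv)
  have hnonneg : ∀ x, 0 ≤ h x := by
    intro x
    apply Set.indicator_nonneg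
    intro y _
    positivity
  have hrw : ∫⁻ ω in Set.Iic (-1 : ℝ), ENNReal.ofReal (1 + |ω|)⁻¹
      = ∫⁻ ω, ENNReal.ofReal (h ω) := by
    rw [← lintegral_indicator measurableSet_Iic]
    congr 1
    ext ω
    by_cases hω : ω ∈ Set.Iic (-1 : ℝ)
    · simp [hh, hω]
    · simp [hh, hω]
  rw [hrw]
  by_contra hne
  have hint : Integrable h volume := by
    rw [← lintegral_ofReal_ne_top_iff_integrable hmeas.aestronglyMeasurable
      (Filter.Eventually.of_forall hnonneg)]
    exact hne
  -- transfer by negation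
  have hint2 : Integrable (fun x => h (-x)) volume := hint.comp_neg
  have hIoi : IntegrableOn (fun x => h (-x)) (Set.Ioi (1 : ℝ)) volume :=
    hint2.integrableOn
  -- on Ioi 1, `h (-x) = (1+x)⁻¹ ≥ x⁻¹ / 2`
  have hcontr : IntegrableOn (fun x : ℝ => x⁻¹) (Set.Ioi (1 : ℝ)) volume := by
    apply Integrable.mono (hIoi.const_mul 2) measurable_inv.aestronglyMeasurable
    filter_upwards [ae_restrict_mem measurableSet_Ioi] with x hx
    have hx1 : (1 : ℝ) < x := hx
    have hx0 : (0 : ℝ) < x := lt_trans one_pos hx1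
    have hxneg : -x ∈ Set.Iic (-1 : ℝ) := by
      simp only [Set.mem_Iic]; linarith
    have : h (-x) = (1 + x)⁻¹ := by
      simp [hh, Set.indicator_of_mem hxneg, abs_of_nonneg hx0.le]
    rw [this]
    rw [Real.norm_eq_abs, Real.norm_eq_abs, abs_of_nonneg (inv_nonneg.mpr hx0.le),
      abs_of_nonneg (by positivity : (0:ℝ) ≤ 2 * (1 + x)⁻¹)]
    rw [show 2 * (1+x)⁻¹ = 2/(1+x) by ring, inv_eq_one_div,
      div_le_div_iff₀ hx0 (by positivity : (0:ℝ) < 1 + x)]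
    nlinarith
  exact not_IntegrableOn_Ioi_inv hcontr

/-- For the window `ψ̂(z) = (1+z)χ_{[-1,1]}(z)` and
`β(ω) = (1+|ω|)⁻¹`, and any measurable `F` with `|F| ≥ 1` a.e. on `[-1,1]`, the
integral `∫∫ |F(ξ)|² |ψ̂(β(ω)(ξ-ω))|² β(ω) dξ dω` diverges.  Consequently (taking
`F = f̂`), the analysis coefficients of such `f ∈ L²(ℝ)` with respect to the affine
Weyl–Heisenberg system `Ψ(x,ω) = M_ω T_x D_{β(ω)} ψ` are not square-integrable, so
`Ψ` is not Bessel even though it is part of a reproducing pair. -/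
theorem affineWeylHeisenberg_not_bessel
    (ψhat : ℝ → ℂ)
    (hψ : ψhat = fun z => ((1 + z : ℝ) : ℂ) * (Set.Icc (-1 : ℝ) 1).indicator (fun _ => (1 : ℂ)) z)
    (F : ℝ → ℂ) (hFmeas : Measurable F)
    (hF1 : ∀ᵐ ξ ∂(volume : Measure ℝ).restrict (Set.Icc (-1 : ℝ) 1),
      1 ≤ ‖F ξ‖) :
    ∫⁻ ω : ℝ, (∫⁻ ξ : ℝ,
        (‖F ξ‖₊ : ℝ≥0∞) ^ 2 * (‖ψhat ((ξ - ω) / (1 + |ω|))‖₊ : ℝ≥0∞) ^ 2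
          * ENNReal.ofReal (1 + |ω|)⁻¹) = ⊤ := by
  rw [eq_top_iff, ← aux_lintegral_top]
  calc ∫⁻ ω in Set.Iic (-1 : ℝ), ENNReal.ofReal (1 + |ω|)⁻¹
      ≤ ∫⁻ ω in Set.Iic (-1 : ℝ), (∫⁻ ξ : ℝ,
        (‖F ξ‖₊ : ℝ≥0∞) ^ 2 * (‖ψhat ((ξ - ω) / (1 + |ω|))‖₊ : ℝ≥0∞) ^ 2
          * ENNReal.ofReal (1 + |ω|)⁻¹) := by
        apply lintegral_mono_ae
        filter_upwards [ae_restrict_mem measurableSet_Iic] with ω hω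
        have hω1 : ω ≤ -1 := hω
        have habs : |ω| = -ω := abs_of_nonpos (by linarith)
        have hd : (0:ℝ) < 1 + |ω| := by rw [habs]; linarith
        -- restrict the inner integral to Icc (-1) 1
        have step1 : ∫⁻ ξ in Set.Icc (-1:ℝ) 1, ENNReal.ofReal (1 + |ω|)⁻¹
            ≤ ∫⁻ ξ in Set.Icc (-1:ℝ) 1,
              (‖F ξ‖₊ : ℝ≥0∞) ^ 2 * (‖ψhat ((ξ - ω) / (1 + |ω|))‖₊ : ℝ≥0∞) ^ 2
                * ENNReal.ofReal (1 + |ω|)⁻¹ := by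
          apply lintegral_mono_ae
          filter_upwards [hF1, ae_restrict_mem measurableSet_Icc] with ξ hFξ hξ
          have hξ1 : -1 ≤ ξ := hξ.1
          have hξ2 : ξ ≤ 1 := hξ.2
          set z : ℝ := (ξ - ω) / (1 + |ω|) with hz
          have hzIcc : z ∈ Set.Icc (-1:ℝ) 1 := by
            constructor
            · rw [hz, le_div_iff₀ hd, habs]; nlinarith
            · rw [hz, div_le_one hd, habs]; linarith
          have honez : (1:ℝ) ≤ 1 + z := by
            rw [hz, habs, le_add_iff_nonneg_right] at *
            rw [le_div_iff₀ hd, habs] at *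
            · nlinarith
          have hψz : (1:ℝ) ≤ ‖ψhat z‖ := by
            rw [hψ]
            simp only [Set.indicator_of_mem hzIcc]
            rw [mul_one, Complex.norm_real, Real.norm_eq_abs,
              abs_of_nonneg (by linarith : (0:ℝ) ≤ 1 + z)]
            exact honez
          have h1 : (1:ℝ≥0∞) ≤ (‖F ξ‖₊ : ℝ≥0∞) ^ 2 := by
            rw [← one_pow 2]
            apply pow_le_pow_left₀ zero_le
            rw [ENNReal.one_le_coe_iff, ← NNReal.coe_le_coe, coe_nnnorm]
            simpa using hFξ
          have h2 : (1:ℝ≥0∞) ≤ (‖ψhat z‖₊ : ℝ≥0∞) ^ 2 := by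
            rw [← one_pow 2]
            apply pow_le_pow_left₀ zero_le
            rw [ENNReal.one_le_coe_iff, ← NNReal.coe_le_coe, coe_nnnorm]
            simpa using hψz
          calc ENNReal.ofReal (1 + |ω|)⁻¹ = 1 * 1 * ENNReal.ofReal (1 + |ω|)⁻¹ := by ring
            _ ≤ (‖F ξ‖₊ : ℝ≥0∞) ^ 2 * (‖ψhat z‖₊ : ℝ≥0∞) ^ 2
                * ENNReal.ofReal (1 + |ω|)⁻¹ :=
              mul_le_mul' (mul_le_mul' h1 h2) le_rfl
        have step0 : ENNReal.ofReal (1 + |ω|)⁻¹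
            ≤ ∫⁻ _ in Set.Icc (-1:ℝ) 1, ENNReal.ofReal (1 + |ω|)⁻¹ := by
          rw [setLIntegral_const, Real.volume_Icc]
          calc ENNReal.ofReal (1 + |ω|)⁻¹ = ENNReal.ofReal (1 + |ω|)⁻¹ * 1 := by ring
            _ ≤ _ := by
                apply mul_le_mul' le_rfl
                rw [show (1:ℝ) - (-1) = 2 by norm_num]
                exact le_trans (by norm_num) le_rfl
        exact le_trans (le_trans step0 step1) (setLIntegral_le_lintegral _ _)
    _ ≤ _ := setLIntegral_le_lintegral _ _
end
end
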